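/- arXiv:2002.06582 — 5 statements merged into one kernel-verified Lean document; each statement's English description precedes it below -/
import Mathlib

section
/- Let n ≥ 1 and s ∈ (0,1]. Set ⟨x⟩ = (1 + (|x| - 1)^4)^{1/4} for x ∈ ℝⁿ, and define φ : ℝⁿ → ℝ by φ(x) = 1 if |x| ≤ 1 and φ(x) = ⟨x⟩^{-n-2s} if |x| ≥ 1. Then φ is twice continuously differentiable on ℝⁿ, and φ, its gradient, and its second derivatives are all bounded on ℝⁿ. -/
open MeasureTheory Real Set

/-- The Japanese-bracket-type weight `⟨x⟩ = (1 + (|x| - 1)^4)^{1/4}`. -/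
noncomputable def jbr {n : ℕ} (x : EuclideanSpace ℝ (Fin n)) : ℝ :=
  (1 + (‖x‖ - 1) ^ 4) ^ ((1 : ℝ) / 4)

/-- The test function `φ(x) = 1` if `|x| ≤ 1`, `φ(x) = ⟨x⟩^{-n-2s}` if `|x| ≥ 1`. -/
noncomputable def phi (n : ℕ) (s : ℝ) (x : EuclideanSpace ℝ (Fin n)) : ℝ :=
  if ‖x‖ ≤ 1 then 1 else jbr x ^ (-((n : ℝ) + 2 * s))

/-! ### Auxiliary 1-dimensional machinery -/

section OneDim

open Filter

lemma hasDerivAt_max_pow (k : ℕ) (hk : 2 ≤ k) (x : ℝ) :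
    HasDerivAt (fun t : ℝ => max t 0 ^ k) ((k : ℝ) * max x 0 ^ (k - 1)) x := by
  rcases lt_trichotomy x 0 with hx | hx | hx
  · have hev : (fun t : ℝ => max t 0 ^ k) =ᶠ[nhds x] fun _ => (0:ℝ) := by
      filter_upwards [Iio_mem_nhds hx] with t ht
      simp [max_eq_right (le_of_lt (mem_Iio.mp ht)), zero_pow (show k ≠ 0 by omega)]
    have h1 := (hasDerivAt_const x (0:ℝ)).congr_of_eventuallyEq hev
    refine h1.congr_deriv ?_
    simp [max_eq_right hx.le, zero_pow (show k - 1 ≠ 0 by omega)]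
  · subst hx
    have hval : (k : ℝ) * max (0:ℝ) 0 ^ (k - 1) = 0 := by
      simp [zero_pow (show k - 1 ≠ 0 by omega)]
    rw [hval, hasDerivAt_iff_tendsto_slope]
    apply squeeze_zero_norm' (a := fun t : ℝ => |t|)
    · filter_upwards [inter_mem self_mem_nhdsWithin
        (nhdsWithin_le_nhds (Metric.ball_mem_nhds (0:ℝ) one_pos))] with t ht
      obtain ⟨htne, htb⟩ := ht
      have htb' : |t| < 1 := by simpa [Real.dist_eq] using htb
      have hslope : slope (fun t : ℝ => max t 0 ^ k) 0 t = max t 0 ^ k / t := by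
        simp [slope_def_field, zero_pow (show k ≠ 0 by omega)]
      rw [hslope, Real.norm_eq_abs]
      rcases le_or_gt t 0 with htn | htp
      · simp [max_eq_right htn, zero_pow (show k ≠ 0 by omega)]
      · have hk1 : k - 1 + 1 = k := by omega
        have hdiv : max t 0 ^ k / t = t ^ (k - 1) := by
          have hpk : t ^ k = t ^ (k - 1) * t := by rw [← pow_succ, hk1]
          rw [max_eq_left htp.le, hpk, mul_div_cancel_right₀ _ htp.ne']
        rw [hdiv, abs_of_nonneg (pow_nonneg htp.le _)]
        have ht1 : t ≤ 1 := le_of_lt (lt_of_le_of_lt (le_abs_self t) htb')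
        calc t ^ (k - 1) ≤ t ^ 1 := pow_le_pow_of_le_one htp.le ht1 (by omega)
          _ = t := pow_one t
          _ ≤ |t| := le_abs_self t
    · exact (continuous_abs.tendsto' 0 0 (by simp)).mono_left nhdsWithin_le_nhds
  · have hev : (fun t : ℝ => max t 0 ^ k) =ᶠ[nhds x] fun t => t ^ k := by
      filter_upwards [Ioi_mem_nhds hx] with t ht
      simp [max_eq_left (le_of_lt (mem_Ioi.mp ht))]
    have h1 := (hasDerivAt_pow k x).congr_of_eventuallyEq hev
    refine h1.congr_deriv ?_
    simp [max_eq_left hx.le]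

lemma contDiff_max_pow_four : ContDiff ℝ 2 (fun t : ℝ => max t 0 ^ 4) := by
  have d4 : deriv (fun t : ℝ => max t 0 ^ 4) = fun t => (4:ℝ) * max t 0 ^ 3 := by
    funext t; exact (hasDerivAt_max_pow 4 (by norm_num) t).deriv
  have d3 : deriv (fun t : ℝ => (4:ℝ) * max t 0 ^ 3) = fun t => (4:ℝ) * ((3:ℝ) * max t 0 ^ 2) := by
    funext t; exact (((hasDerivAt_max_pow 3 (by norm_num) t).const_mul (4:ℝ))).deriv
  rw [show (2 : WithTop ℕ∞) = 1 + 1 by norm_num]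
  refine contDiff_succ_iff_deriv.mpr
    ⟨fun t => (hasDerivAt_max_pow 4 (by norm_num) t).differentiableAt, by simp, ?_⟩
  rw [d4, show (1 : WithTop ℕ∞) = 0 + 1 by norm_num]
  refine contDiff_succ_iff_deriv.mpr
    ⟨fun t => ((hasDerivAt_max_pow 3 (by norm_num) t).const_mul (4:ℝ)).differentiableAt, by simp, ?_⟩
  rw [d3, contDiff_zero]
  fun_prop

/-- The 1-dimensional profile function: `Gf p (‖x‖²) = φ(x)` with `p = -(n+2s)/4`. -/
noncomputable def Gf (p : ℝ) (u : ℝ) : ℝ := (1 + max (Real.sqrt u - 1) 0 ^ 4) ^ p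

lemma Gf_eq_one (p : ℝ) {u : ℝ} (h : u ≤ 1) : Gf p u = 1 := by
  have h1 : Real.sqrt u ≤ 1 := by
    rw [show (1:ℝ) = Real.sqrt 1 by simp]
    exact Real.sqrt_le_sqrt h
  rw [Gf, max_eq_right (by linarith), zero_pow (by norm_num), add_zero, Real.one_rpow]

lemma contDiff_Gf (p : ℝ) : ContDiff ℝ 2 (Gf p) := by
  rw [contDiff_iff_contDiffAt]
  intro u
  rcases lt_or_ge u 1 with h | h
  · apply ContDiffAt.congr_of_eventuallyEq (contDiffAt_const (c := (1:ℝ)))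
    filter_upwards [Iio_mem_nhds h] with v hv
    exact Gf_eq_one p (le_of_lt (mem_Iio.mp hv))
  · have hu0 : u ≠ 0 := by intro h0; rw [h0] at h; norm_num at h
    have hin : ContDiffAt ℝ 2 (fun v => 1 + max (Real.sqrt v - 1) 0 ^ 4) u := by
      apply ContDiffAt.add contDiffAt_const
      exact (contDiff_max_pow_four.contDiffAt).comp u
        ((Real.contDiffAt_sqrt hu0).sub contDiffAt_const)
    have hne : (1 : ℝ) + max (Real.sqrt u - 1) 0 ^ 4 ≠ 0 := by positivity
    exact (Real.contDiffAt_rpow_const_of_ne hne).comp u hin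

lemma Gf_bound (p : ℝ) (hp : p ≤ 0) (u : ℝ) : |Gf p u| ≤ 1 := by
  have h0 : (0:ℝ) < 1 + max (Real.sqrt u - 1) 0 ^ 4 := by positivity
  have h1 : (1:ℝ) ≤ 1 + max (Real.sqrt u - 1) 0 ^ 4 := le_add_of_nonneg_right (by positivity)
  rw [Gf, abs_of_nonneg (Real.rpow_nonneg h0.le p)]
  exact Real.rpow_le_one_of_one_le_of_nonpos h1 hp

/-- The first derivative of `Gf` on `(1,∞)`. -/
noncomputable def g1exp (p u : ℝ) : ℝ :=
  p * 2 * (Real.sqrt u - 1) ^ 3 * (1 + (Real.sqrt u - 1) ^ 4) ^ (p - 1) * (Real.sqrt u)⁻¹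

lemma Gf_eventuallyEq {p u : ℝ} (hu : 1 < u) :
    Gf p =ᶠ[nhds u] fun v => (1 + (Real.sqrt v - 1) ^ 4) ^ p := by
  filter_upwards [Ioi_mem_nhds hu] with v hv
  have h1 : 1 < Real.sqrt v := by
    rw [show (1:ℝ) = Real.sqrt 1 by simp]
    exact Real.sqrt_lt_sqrt (by norm_num) (mem_Ioi.mp hv)
  rw [Gf, max_eq_left (by linarith)]

lemma hasDerivAt_Gf (p : ℝ) {u : ℝ} (hu : 1 < u) : HasDerivAt (Gf p) (g1exp p u) u := by
  have ht0 : 0 < Real.sqrt u := Real.sqrt_pos.2 (by linarith)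
  have hs := Real.hasDerivAt_sqrt (show u ≠ 0 by intro h; rw [h] at hu; norm_num at hu)
  have hw := ((hs.sub_const 1).pow 4).const_add 1
  have hb : (1:ℝ) + (Real.sqrt u - 1) ^ 4 ≠ 0 := by positivity
  have hG := hw.rpow_const (p := p) (Or.inl hb)
  have h1 := hG.congr_of_eventuallyEq (Gf_eventuallyEq hu)
  refine h1.congr_deriv ?_
  rw [g1exp]
  simp only [Pi.pow_apply]
  field_simp
  ring

lemma deriv_Gf_of_lt (p : ℝ) {u : ℝ} (hu : u < 1) : deriv (Gf p) u = 0 := by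
  have hev : Gf p =ᶠ[nhds u] fun _ => (1:ℝ) := by
    filter_upwards [Iio_mem_nhds hu] with v hv
    exact Gf_eq_one p (le_of_lt (mem_Iio.mp hv))
  rw [hev.deriv_eq, deriv_const]

lemma deriv_Gf_of_gt (p : ℝ) {u : ℝ} (hu : 1 < u) : deriv (Gf p) u = g1exp p u :=
  (hasDerivAt_Gf p hu).deriv

lemma contDiff_deriv_Gf (p : ℝ) : ContDiff ℝ 1 (deriv (Gf p)) := by
  have h := contDiff_Gf p
  rw [show (2 : WithTop ℕ∞) = 1 + 1 by norm_num] at h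
  exact (contDiff_succ_iff_deriv.mp h).2.2

lemma continuous_deriv2_Gf (p : ℝ) : Continuous (deriv (deriv (Gf p))) := by
  have h := contDiff_deriv_Gf p
  rw [show (1 : WithTop ℕ∞) = 0 + 1 by norm_num] at h
  exact contDiff_zero.mp (contDiff_succ_iff_deriv.mp h).2.2

lemma vanish_at_one {h : ℝ → ℝ} (hc : Continuous h) (h0 : ∀ v < 1, h v = 0) : h 1 = 0 := by
  have h1 : Tendsto h (nhdsWithin 1 (Iio 1)) (nhds (h 1)) :=
    (hc.tendsto 1).mono_left nhdsWithin_le_nhds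
  have h2 : Tendsto h (nhdsWithin 1 (Iio (1:ℝ))) (nhds 0) := by
    apply Tendsto.congr' _ tendsto_const_nhds
    filter_upwards [self_mem_nhdsWithin] with v hv using (h0 v (mem_Iio.mp hv)).symm
  exact tendsto_nhds_unique h1 h2

lemma deriv_Gf_one (p : ℝ) : deriv (Gf p) 1 = 0 :=
  vanish_at_one (contDiff_deriv_Gf p).continuous (fun v hv => deriv_Gf_of_lt p hv)

lemma deriv2_Gf_of_lt (p : ℝ) {u : ℝ} (hu : u < 1) : deriv (deriv (Gf p)) u = 0 := by
  have hev : deriv (Gf p) =ᶠ[nhds u] fun _ => (0:ℝ) := by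
    filter_upwards [Iio_mem_nhds hu] with v hv
    exact deriv_Gf_of_lt p (mem_Iio.mp hv)
  rw [hev.deriv_eq, deriv_const]

lemma deriv2_Gf_one (p : ℝ) : deriv (deriv (Gf p)) 1 = 0 :=
  vanish_at_one (continuous_deriv2_Gf p) (fun v hv => deriv2_Gf_of_lt p hv)

/-! ### Elementary inequalities -/

lemma aux_one_le {r : ℝ} (hr : 0 ≤ r) : (1:ℝ) ≤ 1 + r^4 := by nlinarith [pow_nonneg hr 4]

lemma aux_rpow_le_one {p r : ℝ} (hp : p ≤ 0) (hr : 0 ≤ r) : (1 + r^4) ^ p ≤ 1 :=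
  Real.rpow_le_one_of_one_le_of_nonpos (aux_one_le hr) hp

lemma aux1 {p r : ℝ} (hp : p ≤ 0) (hr : 0 ≤ r) : r^3 * (1 + r^4) ^ (p-1) ≤ 1 := by
  have ha0 : (0:ℝ) < 1 + r^4 := by positivity
  have hA : (0:ℝ) ≤ (1 + r^4) ^ (p-1) := Real.rpow_nonneg ha0.le _
  have h1 : r^3 ≤ 1 + r^4 := by
    nlinarith [sq_nonneg (r^2 - r), sq_nonneg (r - 1), sq_nonneg r, sq_nonneg (r^2 - 1)]
  calc r^3 * (1 + r^4) ^ (p-1) ≤ (1 + r^4) * (1 + r^4) ^ (p-1) :=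
        mul_le_mul_of_nonneg_right h1 hA
    _ = (1 + r^4) ^ p := by rw [mul_comm, ← Real.rpow_add_one ha0.ne', sub_add_cancel]
    _ ≤ 1 := aux_rpow_le_one hp hr

lemma aux2 {p r : ℝ} (hp : p ≤ 0) (hr : 0 ≤ r) : r^2 * (1 + r^4) ^ (p-1) ≤ 1 := by
  have ha0 : (0:ℝ) < 1 + r^4 := by positivity
  have hA : (0:ℝ) ≤ (1 + r^4) ^ (p-1) := Real.rpow_nonneg ha0.le _
  have h1 : r^2 ≤ 1 + r^4 := by nlinarith [sq_nonneg (r^2 - 1)]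
  calc r^2 * (1 + r^4) ^ (p-1) ≤ (1 + r^4) * (1 + r^4) ^ (p-1) :=
        mul_le_mul_of_nonneg_right h1 hA
    _ = (1 + r^4) ^ p := by rw [mul_comm, ← Real.rpow_add_one ha0.ne', sub_add_cancel]
    _ ≤ 1 := aux_rpow_le_one hp hr

lemma aux3 {p r : ℝ} (hp : p ≤ 0) (hr : 0 ≤ r) : r^6 * (1 + r^4) ^ (p-1-1) ≤ 1 := by
  have ha0 : (0:ℝ) < 1 + r^4 := by positivity
  have hA : (0:ℝ) ≤ (1 + r^4) ^ (p-1-1) := Real.rpow_nonneg ha0.le _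
  have h1 : r^6 ≤ (1 + r^4)^2 := by
    nlinarith [mul_nonneg (sq_nonneg (r^2 - 1)) (pow_nonneg hr 4), pow_nonneg hr 4,
      sq_nonneg (r^2 - 1)]
  calc r^6 * (1 + r^4) ^ (p-1-1) ≤ (1 + r^4)^2 * (1 + r^4) ^ (p-1-1) :=
        mul_le_mul_of_nonneg_right h1 hA
    _ = (1 + r^4) ^ p := by
        rw [← Real.rpow_natCast (1 + r^4) 2, ← Real.rpow_add ha0]
        congr 1; push_cast; ring
    _ ≤ 1 := aux_rpow_le_one hp hr

lemma main_bound (p : ℝ) (hp : p ≤ 0) {t : ℝ} (ht : 1 < t) :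
    |3*p*((t-1)^2*(1+(t-1)^4)^(p-1)) + 4*(p*(p-1))*((t-1)^6*(1+(t-1)^4)^(p-1-1))
      - p*((t-1)^3*(1+(t-1)^4)^(p-1))*t⁻¹| ≤ 4 * |p| + 4 * (|p| * |p - 1|) := by
  have hr : (0:ℝ) ≤ t - 1 := by linarith
  have ha0 : (0:ℝ) < 1 + (t-1)^4 := by positivity
  have ht0 : (0:ℝ) < t := by linarith
  have hti : (0:ℝ) ≤ t⁻¹ := by positivity
  have hti1 : t⁻¹ ≤ 1 := by
    rw [inv_le_one_iff₀]; right; linarith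
  have hW1 : (0:ℝ) ≤ (t-1)^2*(1+(t-1)^4)^(p-1) := by positivity
  have hW2 : (0:ℝ) ≤ (t-1)^6*(1+(t-1)^4)^(p-1-1) := by positivity
  have hW3 : (0:ℝ) ≤ (t-1)^3*(1+(t-1)^4)^(p-1) := by positivity
  have k1 := aux2 hp hr
  have k2 := aux3 hp hr
  have k3 := aux1 hp hr
  have hX : |3*p*((t-1)^2*(1+(t-1)^4)^(p-1))| ≤ 3 * |p| := by
    rw [abs_mul, abs_of_nonneg hW1, abs_mul]
    have : |(3:ℝ)| = 3 := by norm_num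
    rw [this]
    calc 3 * |p| * ((t-1)^2*(1+(t-1)^4)^(p-1)) ≤ 3 * |p| * 1 := by
          apply mul_le_mul_of_nonneg_left k1 (by positivity)
      _ = 3 * |p| := mul_one _
  have hY : |4*(p*(p-1))*((t-1)^6*(1+(t-1)^4)^(p-1-1))| ≤ 4 * (|p| * |p - 1|) := by
    rw [abs_mul, abs_of_nonneg hW2, abs_mul, abs_mul]
    have : |(4:ℝ)| = 4 := by norm_num
    rw [this]
    calc 4 * (|p| * |p - 1|) * ((t-1)^6*(1+(t-1)^4)^(p-1-1)) ≤ 4 * (|p| * |p - 1|) * 1 := by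
          apply mul_le_mul_of_nonneg_left k2 (by positivity)
      _ = 4 * (|p| * |p - 1|) := mul_one _
  have hZ : |p*((t-1)^3*(1+(t-1)^4)^(p-1))*t⁻¹| ≤ |p| := by
    rw [abs_mul, abs_mul, abs_of_nonneg hW3, abs_of_nonneg hti]
    calc |p| * ((t-1)^3*(1+(t-1)^4)^(p-1)) * t⁻¹ ≤ |p| * 1 * 1 := by
          apply mul_le_mul (mul_le_mul_of_nonneg_left k3 (abs_nonneg p)) hti1 hti (by positivity)
      _ = |p| := by ring
  calc |3*p*((t-1)^2*(1+(t-1)^4)^(p-1)) + 4*(p*(p-1))*((t-1)^6*(1+(t-1)^4)^(p-1-1))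
      - p*((t-1)^3*(1+(t-1)^4)^(p-1))*t⁻¹|
      ≤ |3*p*((t-1)^2*(1+(t-1)^4)^(p-1)) + 4*(p*(p-1))*((t-1)^6*(1+(t-1)^4)^(p-1-1))|
        + |p*((t-1)^3*(1+(t-1)^4)^(p-1))*t⁻¹| := abs_sub _ _
    _ ≤ |3*p*((t-1)^2*(1+(t-1)^4)^(p-1))| + |4*(p*(p-1))*((t-1)^6*(1+(t-1)^4)^(p-1-1))|
        + |p*((t-1)^3*(1+(t-1)^4)^(p-1))*t⁻¹| := by
          have := abs_add_le (3*p*((t-1)^2*(1+(t-1)^4)^(p-1)))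
            (4*(p*(p-1))*((t-1)^6*(1+(t-1)^4)^(p-1-1)))
          linarith
    _ ≤ 4 * |p| + 4 * (|p| * |p - 1|) := by linarith [abs_nonneg p]

lemma hasDerivAt_g1exp (p : ℝ) {u : ℝ} (hu : 1 < u) :
    HasDerivAt (g1exp p)
      ((3*p*((Real.sqrt u - 1)^2 * (1+(Real.sqrt u - 1)^4)^(p-1))
        + 4*(p*(p-1))*((Real.sqrt u - 1)^6 * (1+(Real.sqrt u - 1)^4)^(p-1-1))
        - p*((Real.sqrt u - 1)^3 * (1+(Real.sqrt u - 1)^4)^(p-1)) * (Real.sqrt u)⁻¹) / u) u := by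
  have hu0 : (0:ℝ) < u := lt_trans one_pos hu
  have ht0 : 0 < Real.sqrt u := Real.sqrt_pos.2 hu0
  have hs := Real.hasDerivAt_sqrt hu0.ne'
  have hb : (1:ℝ) + (Real.sqrt u - 1) ^ 4 ≠ 0 := by positivity
  have h3 := ((hs.sub_const 1).pow 3).const_mul (p * 2)
  have hA := (((hs.sub_const 1).pow 4).const_add 1).rpow_const (p := p - 1) (Or.inl hb)
  have hinv := hs.inv ht0.ne'
  have hD := (h3.mul hA).mul hinv
  have hfun : (fun v => p * 2 * (Real.sqrt v - 1) ^ 3 * (1 + (Real.sqrt v - 1) ^ 4) ^ (p - 1)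
      * (Real.sqrt v)⁻¹) = g1exp p := rfl
  rw [← hfun]
  refine hD.congr_deriv ?_
  simp only [Pi.pow_apply, Pi.inv_apply, Pi.mul_apply]
  set t := Real.sqrt u with htdef
  have hu2 : u = t ^ 2 := by rw [htdef, Real.sq_sqrt hu0.le]
  have ht0' : t ≠ 0 := ht0.ne'
  rw [hu2]
  field_simp
  ring

lemma deriv_Gf_bound_sqrt (p : ℝ) (hp : p ≤ 0) (u : ℝ) :
    |deriv (Gf p) u| * Real.sqrt u ≤ 2 * |p| := by
  rcases lt_trichotomy u 1 with h | h | h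
  · rw [deriv_Gf_of_lt p h]
    simp only [abs_zero, zero_mul]
    positivity
  · subst h
    rw [deriv_Gf_one]
    simp only [abs_zero, zero_mul]
    positivity
  · rw [deriv_Gf_of_gt p h]
    have hu0 : (0:ℝ) < u := lt_trans one_pos h
    have ht0 : 0 < Real.sqrt u := Real.sqrt_pos.2 hu0
    have ht1 : 1 < Real.sqrt u := by
      rw [show (1:ℝ) = Real.sqrt 1 by simp]
      exact Real.sqrt_lt_sqrt (by norm_num) h
    have hr : (0:ℝ) ≤ Real.sqrt u - 1 := by linarith
    have hA : (0:ℝ) ≤ (1 + (Real.sqrt u - 1)^4) ^ (p-1) :=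
      Real.rpow_nonneg (by positivity) _
    have key : |g1exp p u| * Real.sqrt u
        = 2 * |p| * ((Real.sqrt u - 1)^3 * (1 + (Real.sqrt u - 1)^4)^(p-1)) := by
      rw [g1exp, abs_mul, abs_mul, abs_mul, abs_inv, abs_of_nonneg (pow_nonneg hr 3),
        abs_of_nonneg hA, abs_of_pos ht0, abs_mul]
      have h2 : |(2:ℝ)| = 2 := by norm_num
      rw [h2]
      field_simp
    rw [key]
    calc 2 * |p| * ((Real.sqrt u - 1)^3 * (1 + (Real.sqrt u - 1)^4)^(p-1)) ≤ 2 * |p| * 1 :=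
          mul_le_mul_of_nonneg_left (aux1 hp hr) (by positivity)
      _ = 2 * |p| := mul_one _

lemma deriv_Gf_bound (p : ℝ) (hp : p ≤ 0) (u : ℝ) : |deriv (Gf p) u| ≤ 2 * |p| := by
  rcases le_or_gt u 1 with h | h
  · rcases lt_or_eq_of_le h with h' | h'
    · rw [deriv_Gf_of_lt p h']; simp
    · subst h'; rw [deriv_Gf_one]; simp
  · have ht1 : 1 ≤ Real.sqrt u := by
      rw [show (1:ℝ) = Real.sqrt 1 by simp]
      exact Real.sqrt_le_sqrt h.le
    calc |deriv (Gf p) u| = |deriv (Gf p) u| * 1 := (mul_one _).symm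
      _ ≤ |deriv (Gf p) u| * Real.sqrt u :=
          mul_le_mul_of_nonneg_left ht1 (abs_nonneg _)
      _ ≤ 2 * |p| := deriv_Gf_bound_sqrt p hp u

lemma deriv2_Gf_bound (p : ℝ) (hp : p ≤ 0) (u : ℝ) :
    |deriv (deriv (Gf p)) u| * u ≤ 4 * |p| + 4 * (|p| * |p - 1|) := by
  rcases lt_trichotomy u 1 with h | h | h
  · rw [deriv2_Gf_of_lt p h]
    simp only [abs_zero, zero_mul]
    positivity
  · subst h
    rw [deriv2_Gf_one]
    simp only [abs_zero, zero_mul]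
    positivity
  · have hu0 : (0:ℝ) < u := lt_trans one_pos h
    have ht1 : 1 < Real.sqrt u := by
      rw [show (1:ℝ) = Real.sqrt 1 by simp]
      exact Real.sqrt_lt_sqrt (by norm_num) h
    have hev : deriv (Gf p) =ᶠ[nhds u] g1exp p := by
      filter_upwards [Ioi_mem_nhds h] with v hv
      exact deriv_Gf_of_gt p (mem_Ioi.mp hv)
    have hD2 := (hasDerivAt_g1exp p h).congr_of_eventuallyEq hev
    rw [hD2.deriv, abs_div, abs_of_pos hu0, div_mul_cancel₀ _ hu0.ne']
    exact main_bound p hp ht1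

end OneDim

/-! ### The vector-valued machinery -/

section VecSide

variable {E : Type*} [NormedAddCommGroup E] [InnerProductSpace ℝ E]

/-- The inner product, bundled as an `ℝ`-continuous linear map in the first variable. -/
noncomputable def innerCLM (E : Type*) [NormedAddCommGroup E] [InnerProductSpace ℝ E] :
    E →L[ℝ] E →L[ℝ] ℝ := innerSL ℝ

/-- The derivative of `x ↦ ‖x‖²`, as a continuous linear map in `x`. -/
noncomputable def normSqCLM (E : Type*) [NormedAddCommGroup E] [InnerProductSpace ℝ E] :
    E →L[ℝ] E →L[ℝ] ℝ := (2:ℝ) • innerCLM E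

lemma hasFDerivAt_normSq (y : E) : HasFDerivAt (fun x : E => ‖x‖^2) (normSqCLM E y) y := by
  have h := (hasStrictFDerivAt_norm_sq y).hasFDerivAt
  convert h using 1
  ext v
  show (2:ℝ) • (innerCLM E y v) = _
  have h2 : (innerCLM E y) v = (inner ℝ y v : ℝ) := rfl
  simp [two_smul, h2]; ring

lemma normSqCLM_apply_le (y : E) : ‖normSqCLM E y‖ ≤ 2 * ‖y‖ := by
  have h2 : normSqCLM E y = (2:ℝ) • (innerCLM E y : E →L[ℝ] ℝ) := rfl
  rw [h2, norm_smul ((2:ℝ)) (innerCLM E y : E →L[ℝ] ℝ)]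
  have h3 : ‖(innerCLM E y : E →L[ℝ] ℝ)‖ = ‖y‖ := innerSL_apply_norm (𝕜 := ℝ) y
  rw [h3]; simp

lemma normSqCLM_norm_le : ‖normSqCLM E‖ ≤ 2 := by
  apply ContinuousLinearMap.opNorm_le_bound _ (by norm_num)
  intro y
  exact (normSqCLM_apply_le y).trans (by rw [mul_comm])

lemma clm2_smul_norm_le (c : ℝ) (T : E →L[ℝ] E →L[ℝ] ℝ) : ‖c • T‖ ≤ |c| * ‖T‖ := by
  apply ContinuousLinearMap.opNorm_le_bound _ (by positivity)
  intro y
  have h1 : (c • T) y = c • (T y) := rfl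
  rw [h1, norm_smul c (T y), mul_assoc, Real.norm_eq_abs]
  gcongr
  exact T.le_opNorm y


lemma norm_iteratedFDeriv_one_le {F : Type*} [NormedAddCommGroup F] [NormedSpace ℝ F]
    {G : Type*} [NormedAddCommGroup G] [NormedSpace ℝ G] (f : F → G) (x : F) :
    ‖iteratedFDeriv ℝ 1 f x‖ ≤ ‖fderiv ℝ f x‖ := by
  apply ContinuousMultilinearMap.opNorm_le_bound (norm_nonneg _)
  intro m
  rw [iteratedFDeriv_one_apply]
  calc ‖fderiv ℝ f x (m 0)‖ ≤ ‖fderiv ℝ f x‖ * ‖m 0‖ := ContinuousLinearMap.le_opNorm _ _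
    _ = ‖fderiv ℝ f x‖ * ∏ i, ‖m i‖ := by rw [Fin.prod_univ_one]


set_option maxHeartbeats 1000000 in
set_option synthInstance.maxHeartbeats 1000000 in
lemma comp_norm_sq_deriv_bounds (G : ℝ → ℝ) (hG : ContDiff ℝ 2 G) (B1 B2 : ℝ)
    (h1s : ∀ u, |deriv G u| * Real.sqrt u ≤ B1)
    (h1 : ∀ u, |deriv G u| ≤ B1)
    (h2 : ∀ u, |deriv (deriv G) u| * u ≤ B2)
    (x : E) :
    ‖fderiv ℝ (G ∘ fun x : E => ‖x‖ ^ 2) x‖ ≤ 2 * B1 ∧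
    ‖iteratedFDeriv ℝ 2 (G ∘ fun x : E => ‖x‖ ^ 2) x‖ ≤ 2 * B1 + 4 * B2 := by
  have hGdiff : Differentiable ℝ G := hG.differentiable (by norm_num)
  have hg1diff : Differentiable ℝ (deriv G) := by
    have h := hG
    rw [show (2 : WithTop ℕ∞) = 1 + 1 by norm_num] at h
    exact ((contDiff_succ_iff_deriv.mp h).2.2).differentiable (by norm_num)
  have hF : ∀ y : E, HasFDerivAt (G ∘ fun x : E => ‖x‖ ^ 2)
      (deriv G (‖y‖^2) • normSqCLM E y) y := fun y =>
    HasDerivAt.comp_hasFDerivAt y ((hGdiff (‖y‖^2)).hasDerivAt) (hasFDerivAt_normSq y)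
  have hfderiv : fderiv ℝ (G ∘ fun x : E => ‖x‖ ^ 2)
      = fun y : E => deriv G (‖y‖^2) • normSqCLM E y := funext fun y => (hF y).fderiv
  have hsq : Real.sqrt (‖x‖^2) = ‖x‖ := Real.sqrt_sq (norm_nonneg x)
  have hB1 : 0 ≤ B1 := le_trans (by positivity) (h1 0)
  constructor
  · rw [hfderiv]
    have e1 : ‖deriv G (‖x‖^2) • normSqCLM E x‖ = |deriv G (‖x‖^2)| * ‖normSqCLM E x‖ := by
      rw [norm_smul (deriv G (‖x‖^2)) (normSqCLM E x), Real.norm_eq_abs]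
    rw [e1]
    have e2 : |deriv G (‖x‖^2)| * ‖normSqCLM E x‖ ≤ |deriv G (‖x‖^2)| * (2 * ‖x‖) :=
      mul_le_mul_of_nonneg_left (normSqCLM_apply_le x) (abs_nonneg _)
    have e3 : |deriv G (‖x‖^2)| * (2 * ‖x‖) = 2 * (|deriv G (‖x‖^2)| * Real.sqrt (‖x‖^2)) := by
      rw [hsq]; ring
    have e4 := h1s (‖x‖^2)
    linarith
  · have hF2 : HasFDerivAt (fun y : E => deriv G (‖y‖^2) • normSqCLM E y)
        (deriv G (‖x‖^2) • normSqCLM E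
          + (deriv (deriv G) (‖x‖^2) • normSqCLM E x).smulRight (normSqCLM E x)) x :=
      HasFDerivAt.fun_smul (c := deriv G ∘ fun y : E => ‖y‖ ^ 2)
        (HasDerivAt.comp_hasFDerivAt x ((hg1diff (‖x‖^2)).hasDerivAt) (hasFDerivAt_normSq x))
        (normSqCLM E).hasFDerivAt
    have e1 : ‖iteratedFDeriv ℝ 2 (G ∘ fun x : E => ‖x‖ ^ 2) x‖
        = ‖iteratedFDeriv ℝ 1 (fderiv ℝ (G ∘ fun x : E => ‖x‖ ^ 2)) x‖ :=
      (norm_iteratedFDeriv_fderiv (n := 1)).symm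
    rw [e1]
    have e2 := norm_iteratedFDeriv_one_le (fderiv ℝ (G ∘ fun x : E => ‖x‖ ^ 2)) x
    have e3 : fderiv ℝ (fderiv ℝ (G ∘ fun x : E => ‖x‖ ^ 2)) x
        = deriv G (‖x‖^2) • normSqCLM E
          + (deriv (deriv G) (‖x‖^2) • normSqCLM E x).smulRight (normSqCLM E x) := by
      rw [hfderiv]
      exact hF2.fderiv
    have t1 : ‖deriv G (‖x‖^2) • (normSqCLM E : E →L[ℝ] E →L[ℝ] ℝ)‖ ≤ B1 * 2 := by
      have ha := clm2_smul_norm_le (deriv G (‖x‖^2)) (normSqCLM E)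
      have := h1 (‖x‖^2)
      have h2' := normSqCLM_norm_le (E := E)
      nlinarith [abs_nonneg (deriv G (‖x‖^2)), norm_nonneg (normSqCLM E)]
    have t2 : ‖(deriv (deriv G) (‖x‖^2) • normSqCLM E x).smulRight (normSqCLM E x)‖
        ≤ 4 * B2 := by
      rw [ContinuousLinearMap.norm_smulRight_apply,
        norm_smul (deriv (deriv G) (‖x‖^2)) (normSqCLM E x), Real.norm_eq_abs]
      have hb := h2 (‖x‖^2)
      have hLx := normSqCLM_apply_le x
      have hnn1 : (0:ℝ) ≤ |deriv (deriv G) (‖x‖^2)| := abs_nonneg _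
      have hnn2 : (0:ℝ) ≤ ‖normSqCLM E x‖ := norm_nonneg _
      have hnn3 : (0:ℝ) ≤ ‖x‖ := norm_nonneg x
      calc |deriv (deriv G) (‖x‖^2)| * ‖normSqCLM E x‖ * ‖normSqCLM E x‖
          ≤ |deriv (deriv G) (‖x‖^2)| * (2 * ‖x‖) * (2 * ‖x‖) := by
            apply mul_le_mul (mul_le_mul_of_nonneg_left hLx hnn1) hLx hnn2
            positivity
        _ = 4 * (|deriv (deriv G) (‖x‖^2)| * ‖x‖^2) := by ring
        _ ≤ 4 * B2 := by nlinarith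
    calc ‖iteratedFDeriv ℝ 1 (fderiv ℝ (G ∘ fun x : E => ‖x‖ ^ 2)) x‖
        ≤ ‖fderiv ℝ (fderiv ℝ (G ∘ fun x : E => ‖x‖ ^ 2)) x‖ := e2
      _ = ‖deriv G (‖x‖^2) • normSqCLM E
          + (deriv (deriv G) (‖x‖^2) • normSqCLM E x).smulRight (normSqCLM E x)‖ := by rw [e3]
      _ ≤ ‖deriv G (‖x‖^2) • (normSqCLM E : E →L[ℝ] E →L[ℝ] ℝ)‖
          + ‖(deriv (deriv G) (‖x‖^2) • normSqCLM E x).smulRight (normSqCLM E x)‖ :=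
          norm_add_le (deriv G (‖x‖^2) • normSqCLM E : E →L[ℝ] E →L[ℝ] ℝ)
            ((deriv (deriv G) (‖x‖^2) • normSqCLM E x).smulRight (normSqCLM E x))
      _ ≤ 2 * B1 + 4 * B2 := by linarith

end VecSide

set_option maxHeartbeats 2000000 in
set_option synthInstance.maxHeartbeats 400000 in
/-- For `n ≥ 1` and `s ∈ (0,1]`, the function `φ` is twice continuously
differentiable on `ℝⁿ`, and `φ`, its gradient and its second derivatives are
all bounded. -/
theorem stmt_4 (n : ℕ) (hn : 1 ≤ n) (s : ℝ) (hs : s ∈ Set.Ioc (0 : ℝ) 1) :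
    ContDiff ℝ 2 (phi n s) ∧
    ∃ C : ℝ, ∀ x : EuclideanSpace ℝ (Fin n),
      |phi n s x| ≤ C ∧ ‖fderiv ℝ (phi n s) x‖ ≤ C ∧
        ‖iteratedFDeriv ℝ 2 (phi n s) x‖ ≤ C := by
  obtain ⟨hs0, hs1⟩ := hs
  set p : ℝ := -((n : ℝ) + 2 * s) / 4 with hpdef
  have hn0 : (0:ℝ) ≤ (n : ℝ) := Nat.cast_nonneg n
  have hp : p ≤ 0 := by
    rw [hpdef, neg_div]
    exact neg_nonpos_of_nonneg (div_nonneg (by linarith) (by norm_num))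
  -- identification of `phi` with the composition
  have hphi : phi n s = Gf p ∘ (fun x : EuclideanSpace ℝ (Fin n) => ‖x‖ ^ 2) := by
    funext x
    simp only [Function.comp_apply, phi, Gf, Real.sqrt_sq (norm_nonneg x)]
    by_cases h : ‖x‖ ≤ 1
    · rw [if_pos h, max_eq_right (by linarith), zero_pow (by norm_num), add_zero, Real.one_rpow]
    · push_neg at h
      rw [if_neg (not_le.mpr h), max_eq_left (by linarith), jbr,
        ← Real.rpow_mul (by positivity)]
      congr 1
      rw [hpdef]; ring
  rw [hphi]
  constructor
  · exact (contDiff_Gf p).comp (contDiff_norm_sq ℝ)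
  · set C2 : ℝ := 4 * |p| + 4 * (|p| * |p - 1|) with hC2
    have hC2nn : 0 ≤ C2 := by rw [hC2]; positivity
    refine ⟨1 + 2 * (2 * |p|) + (2 * (2 * |p|) + 4 * C2), fun x => ?_⟩
    have hmain := comp_norm_sq_deriv_bounds (Gf p) (contDiff_Gf p) (2 * |p|) C2
      (deriv_Gf_bound_sqrt p hp) (deriv_Gf_bound p hp) (deriv2_Gf_bound p hp) x
    have hval := Gf_bound p hp (‖x‖^2)
    have hval' : |(Gf p ∘ fun x : EuclideanSpace ℝ (Fin n) => ‖x‖ ^ 2) x| ≤ 1 := hval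
    have hpnn : (0:ℝ) ≤ |p| := abs_nonneg p
    exact ⟨by linarith, by linarith [hmain.1], by linarith [hmain.2]⟩
end

section
/- Let n ≥ 1 and s ∈ (0,1). Set ⟨x⟩ = (1 + (|x| - 1)^4)^{1/4} for x ∈ ℝⁿ, and define φ : ℝⁿ → ℝ by φ(x) = 1 if |x| ≤ 1 and φ(x) = ⟨x⟩^{-n-2s} if |x| ≥ 1. Then there exists a constant C > 0 (depending only on n and s) such that for every x ∈ ℝⁿ with |x| ≥ 2, ∫_{|y| ≥ 2|x|} |φ(x+y) + φ(x-y) - 2φ(x)| / |y|^{n+2s} dy ≤ C ⟨x⟩^{-n-4s}. -/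
open MeasureTheory Real Set

private lemma one_le_jbr {n : ℕ} (x : EuclideanSpace ℝ (Fin n)) : 1 ≤ jbr x := by
  have h4 : (0:ℝ) ≤ (‖x‖ - 1) ^ 4 := by positivity
  have h : (1:ℝ) ≤ 1 + (‖x‖ - 1) ^ 4 := by linarith
  calc (1:ℝ) = 1 ^ ((1:ℝ)/4) := (Real.one_rpow _).symm
  _ ≤ (1 + (‖x‖ - 1) ^ 4) ^ ((1:ℝ)/4) := Real.rpow_le_rpow zero_le_one h (by norm_num)

private lemma jbr_pos {n : ℕ} (x : EuclideanSpace ℝ (Fin n)) : 0 < jbr x :=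
  lt_of_lt_of_le one_pos (one_le_jbr x)

private lemma jbr_mono {n : ℕ} {x z : EuclideanSpace ℝ (Fin n)} (h1 : 1 ≤ ‖x‖)
    (h : ‖x‖ ≤ ‖z‖) : jbr x ≤ jbr z := by
  unfold jbr
  apply Real.rpow_le_rpow (by positivity) _ (by norm_num)
  have hle : (‖x‖ - 1) ^ 4 ≤ (‖z‖ - 1) ^ 4 := by
    apply pow_le_pow_left₀ (by linarith) (by linarith)
  linarith

private lemma jbr_le {n : ℕ} {x : EuclideanSpace ℝ (Fin n)} (hx : 1 ≤ ‖x‖) :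
    jbr x ≤ 2 * ‖x‖ := by
  have h1 : (1:ℝ) + (‖x‖ - 1) ^ 4 ≤ (2 * ‖x‖) ^ 4 := by nlinarith [hx, sq_nonneg (‖x‖ - 1)]
  have h2 : jbr x ≤ ((2 * ‖x‖) ^ 4) ^ ((1:ℝ)/4) :=
    Real.rpow_le_rpow (by positivity) h1 (by norm_num)
  have h3 : ((2 * ‖x‖) ^ 4 : ℝ) ^ ((1:ℝ)/4) = 2 * ‖x‖ := by
    rw [← Real.rpow_natCast (2 * ‖x‖) 4, ← Real.rpow_mul (by positivity)]
    norm_num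
  rw [h3] at h2
  exact h2

private lemma phi_nonneg (n : ℕ) (s : ℝ) (z : EuclideanSpace ℝ (Fin n)) : 0 ≤ phi n s z := by
  unfold phi
  split_ifs
  · exact zero_le_one
  · exact Real.rpow_nonneg (jbr_pos z).le _

private lemma phi_le {n : ℕ} {s : ℝ} {x z : EuclideanSpace ℝ (Fin n)}
    (hsn : 0 ≤ (n:ℝ) + 2 * s) (hx : 2 ≤ ‖x‖) (h : ‖x‖ ≤ ‖z‖) :
    phi n s z ≤ jbr x ^ (-((n : ℝ) + 2 * s)) := by
  unfold phi
  rw [if_neg (by linarith)]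
  exact Real.rpow_le_rpow_of_nonpos (jbr_pos x) (jbr_mono (by linarith) h) (by linarith)

private lemma tail_lintegral {n : ℕ} (p : ℝ) {R : ℝ} (hR : 0 < R) :
    ∫⁻ y in {y : EuclideanSpace ℝ (Fin n) | R ≤ ‖y‖}, ENNReal.ofReal (‖y‖ ^ (-p))
      = ENNReal.ofReal (R ^ ((n:ℝ) - p)) *
        ∫⁻ z in {z : EuclideanSpace ℝ (Fin n) | 1 ≤ ‖z‖}, ENNReal.ofReal (‖z‖ ^ (-p)) := by
  have hsetR : MeasurableSet {y : EuclideanSpace ℝ (Fin n) | R ≤ ‖y‖} :=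
    measurableSet_le measurable_const measurable_norm
  have hset1 : MeasurableSet {z : EuclideanSpace ℝ (Fin n) | 1 ≤ ‖z‖} :=
    measurableSet_le measurable_const measurable_norm
  have fmeas : Measurable fun y : EuclideanSpace ℝ (Fin n) => ENNReal.ofReal (‖y‖ ^ (-p)) := by fun_prop
  set F : EuclideanSpace ℝ (Fin n) → ENNReal :=
    Set.indicator {y : EuclideanSpace ℝ (Fin n) | R ≤ ‖y‖} (fun y => ENNReal.ofReal (‖y‖ ^ (-p))) with hF
  have hFmeas : Measurable F := fmeas.indicator hsetR
  have hmap : Measure.map (R • ·) (volume : Measure (EuclideanSpace ℝ (Fin n)))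
      = ENNReal.ofReal (R ^ (-(n:ℝ))) • volume := by
    rw [Measure.map_addHaar_smul volume (ne_of_gt hR)]
    congr 2
    rw [finrank_euclideanSpace_fin, abs_of_pos (by positivity),
      ← Real.rpow_natCast R n, ← Real.rpow_neg hR.le]
  have h1 : ∫⁻ y, F y ∂(Measure.map (R • ·) (volume : Measure (EuclideanSpace ℝ (Fin n)))) = ∫⁻ z, F (R • z) :=
    lintegral_map hFmeas (measurable_const_smul R)
  rw [hmap, lintegral_smul_measure] at h1
  have h2 : ∀ z : EuclideanSpace ℝ (Fin n), F (R • z) = ENNReal.ofReal (R ^ (-p)) *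
      Set.indicator {z : EuclideanSpace ℝ (Fin n) | 1 ≤ ‖z‖} (fun z => ENNReal.ofReal (‖z‖ ^ (-p))) z := by
    intro z
    have hnorm : ‖R • z‖ = R * ‖z‖ := by
      rw [norm_smul, Real.norm_eq_abs, abs_of_pos hR]
    by_cases hz : 1 ≤ ‖z‖
    · have hmem : R • z ∈ {y : EuclideanSpace ℝ (Fin n) | R ≤ ‖y‖} := by
        simp only [mem_setOf_eq, hnorm]; nlinarith
      rw [hF, Set.indicator_of_mem hmem, Set.indicator_of_mem (show z ∈ {z : EuclideanSpace ℝ (Fin n) | 1 ≤ ‖z‖} from hz), hnorm,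
        Real.mul_rpow hR.le (norm_nonneg z),
        ENNReal.ofReal_mul (Real.rpow_nonneg hR.le _)]
    · have hmem : R • z ∉ {y : EuclideanSpace ℝ (Fin n) | R ≤ ‖y‖} := by
        simp only [mem_setOf_eq, hnorm, not_le] at *
        nlinarith
      rw [hF, Set.indicator_of_notMem hmem, Set.indicator_of_notMem (show z ∉ {z : EuclideanSpace ℝ (Fin n) | 1 ≤ ‖z‖} from hz), mul_zero]
  simp only [h2] at h1
  rw [lintegral_const_mul' _ _ ENNReal.ofReal_ne_top, lintegral_indicator hset1] at h1
  rw [hF, lintegral_indicator hsetR] at h1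
  set T := ∫⁻ y in {y : EuclideanSpace ℝ (Fin n) | R ≤ ‖y‖}, ENNReal.ofReal (‖y‖ ^ (-p)) with hT
  set I₀ := ∫⁻ z in {z : EuclideanSpace ℝ (Fin n) | 1 ≤ ‖z‖}, ENNReal.ofReal (‖z‖ ^ (-p)) with hI₀
  calc T = ENNReal.ofReal (R ^ ((n:ℝ))) * (ENNReal.ofReal (R ^ (-(n:ℝ))) * T) := by
        rw [← mul_assoc, ← ENNReal.ofReal_mul (Real.rpow_nonneg hR.le _),
          ← Real.rpow_add hR, add_neg_cancel, Real.rpow_zero, ENNReal.ofReal_one, one_mul]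
    _ = ENNReal.ofReal (R ^ ((n:ℝ))) * (ENNReal.ofReal (R ^ (-p)) * I₀) := by rw [← h1, smul_eq_mul]
    _ = ENNReal.ofReal (R ^ ((n:ℝ) - p)) * I₀ := by
        rw [← mul_assoc, ← ENNReal.ofReal_mul (Real.rpow_nonneg hR.le _),
          ← Real.rpow_add hR, sub_eq_add_neg]

/-- For `n ≥ 1` and `s ∈ (0,1)`, there is a constant `C > 0` (depending only on
`n` and `s`) such that for every `x` with `|x| ≥ 2`,
`∫_{|y| ≥ 2|x|} |φ(x+y) + φ(x-y) - 2φ(x)| / |y|^{n+2s} dy ≤ C ⟨x⟩^{-n-4s}`. -/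
theorem stmt_9 (n : ℕ) (hn : 1 ≤ n) (s : ℝ) (hs : s ∈ Set.Ioo (0 : ℝ) 1) :
    ∃ C : ℝ, 0 < C ∧ ∀ x : EuclideanSpace ℝ (Fin n), 2 ≤ ‖x‖ →
      ∫⁻ y in {y : EuclideanSpace ℝ (Fin n) | 2 * ‖x‖ ≤ ‖y‖},
          ENNReal.ofReal
            (|phi n s (x + y) + phi n s (x - y) - 2 * phi n s x| /
              ‖y‖ ^ ((n : ℝ) + 2 * s))
        ≤ ENNReal.ofReal (C * jbr x ^ (-((n : ℝ) + 4 * s))) := by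
  obtain ⟨hs0, hs1⟩ := hs
  set p : ℝ := (n : ℝ) + 2 * s with hp
  have hn0 : (0:ℝ) ≤ (n:ℝ) := Nat.cast_nonneg n
  have hp0 : 0 < p := by rw [hp]; linarith
  have hpn : (Module.finrank ℝ (EuclideanSpace ℝ (Fin n)) : ℝ) < p := by
    rw [finrank_euclideanSpace_fin, hp]; linarith
  have hset1 : MeasurableSet {z : EuclideanSpace ℝ (Fin n) | 1 ≤ ‖z‖} :=
    measurableSet_le measurable_const measurable_norm
  set I₀ : ENNReal := ∫⁻ z in {z : EuclideanSpace ℝ (Fin n) | 1 ≤ ‖z‖}, ENNReal.ofReal (‖z‖ ^ (-p)) with hI₀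
  have hI₀lt : I₀ < ⊤ := by
    have hb : ∀ z : EuclideanSpace ℝ (Fin n), z ∈ {z : EuclideanSpace ℝ (Fin n) | 1 ≤ ‖z‖} →
        ENNReal.ofReal (‖z‖ ^ (-p)) ≤ ENNReal.ofReal ((2:ℝ) ^ p * (1 + ‖z‖) ^ (-p)) := by
      intro z hz
      apply ENNReal.ofReal_le_ofReal
      have h1 : (1:ℝ) ≤ ‖z‖ := hz
      have h3 : ((2:ℝ) * ‖z‖) ^ (-p) ≤ (1 + ‖z‖) ^ (-p) :=
        Real.rpow_le_rpow_of_nonpos (by linarith) (by linarith) (by linarith)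
      have h4 : ((2:ℝ) * ‖z‖) ^ (-p) = (2:ℝ) ^ (-p) * ‖z‖ ^ (-p) :=
        Real.mul_rpow (by norm_num) (norm_nonneg z)
      have h5 : (2:ℝ) ^ p * (2:ℝ) ^ (-p) = 1 := by
        rw [← Real.rpow_add (by norm_num)]; simp
      calc ‖z‖ ^ (-p) = (2:ℝ) ^ p * ((2:ℝ) ^ (-p) * ‖z‖ ^ (-p)) := by
            rw [← mul_assoc, h5, one_mul]
        _ ≤ (2:ℝ) ^ p * (1 + ‖z‖) ^ (-p) := by
            apply mul_le_mul_of_nonneg_left _ (Real.rpow_nonneg (by norm_num) p)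
            rw [← h4]; exact h3
    calc I₀ ≤ ∫⁻ z in {z : EuclideanSpace ℝ (Fin n) | 1 ≤ ‖z‖}, ENNReal.ofReal ((2:ℝ) ^ p * (1 + ‖z‖) ^ (-p)) :=
          setLIntegral_mono' hset1 hb
      _ ≤ ∫⁻ z : EuclideanSpace ℝ (Fin n), ENNReal.ofReal ((2:ℝ) ^ p * (1 + ‖z‖) ^ (-p)) :=
          setLIntegral_le_lintegral _ _
      _ = ∫⁻ z : EuclideanSpace ℝ (Fin n), ENNReal.ofReal ((2:ℝ) ^ p) * ENNReal.ofReal ((1 + ‖z‖) ^ (-p)) := by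
          simp_rw [ENNReal.ofReal_mul (Real.rpow_nonneg (by norm_num : (0:ℝ) ≤ 2) p)]
      _ = ENNReal.ofReal ((2:ℝ) ^ p) * ∫⁻ z : EuclideanSpace ℝ (Fin n), ENNReal.ofReal ((1 + ‖z‖) ^ (-p)) :=
          lintegral_const_mul' _ _ ENNReal.ofReal_ne_top
      _ < ⊤ := ENNReal.mul_lt_top ENNReal.ofReal_lt_top (finite_integral_one_add_norm hpn)
  refine ⟨4 * I₀.toReal + 1, by positivity, fun x hx => ?_⟩
  set S : Set (EuclideanSpace ℝ (Fin n)) := {y : EuclideanSpace ℝ (Fin n) | 2 * ‖x‖ ≤ ‖y‖} with hS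
  have hSmeas : MeasurableSet S := measurableSet_le measurable_const measurable_norm
  set M : ℝ := jbr x ^ (-p) with hM
  have hM0 : 0 ≤ M := Real.rpow_nonneg (jbr_pos x).le _
  have hpt : ∀ y ∈ S, ENNReal.ofReal
      (|phi n s (x + y) + phi n s (x - y) - 2 * phi n s x| / ‖y‖ ^ p)
      ≤ ENNReal.ofReal ((4 * M) * ‖y‖ ^ (-p)) := by
    intro y hy
    have hy' : 2 * ‖x‖ ≤ ‖y‖ := hy
    have hyp : (0:ℝ) < ‖y‖ := by linarith
    have hxy1 : ‖x‖ ≤ ‖x + y‖ := by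
      have h := norm_sub_le (x + y) x
      rw [add_sub_cancel_left] at h
      linarith
    have hxy2 : ‖x‖ ≤ ‖x - y‖ := by
      have h := norm_sub_le x (x - y)
      rw [sub_sub_cancel] at h
      linarith
    have ha : phi n s (x + y) ≤ M := phi_le (by linarith) hx hxy1
    have hb : phi n s (x - y) ≤ M := phi_le (by linarith) hx hxy2
    have hc : phi n s x ≤ M := phi_le (by linarith) hx le_rfl
    have ha0 := phi_nonneg n s (x + y)
    have hb0 := phi_nonneg n s (x - y)
    have hc0 := phi_nonneg n s x
    have habs : |phi n s (x + y) + phi n s (x - y) - 2 * phi n s x| ≤ 4 * M :=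
      abs_le.mpr ⟨by linarith, by linarith⟩
    apply ENNReal.ofReal_le_ofReal
    have hD : (0:ℝ) < ‖y‖ ^ p := Real.rpow_pos_of_pos hyp p
    calc |phi n s (x + y) + phi n s (x - y) - 2 * phi n s x| / ‖y‖ ^ p
        ≤ (4 * M) / ‖y‖ ^ p := by gcongr
      _ = (4 * M) * ‖y‖ ^ (-p) := by
          rw [Real.rpow_neg hyp.le, div_eq_mul_inv]
  have hR : (0:ℝ) < 2 * ‖x‖ := by linarith
  have hItR : I₀ = ENNReal.ofReal I₀.toReal := (ENNReal.ofReal_toReal hI₀lt.ne).symm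
  calc ∫⁻ y in S, ENNReal.ofReal
        (|phi n s (x + y) + phi n s (x - y) - 2 * phi n s x| / ‖y‖ ^ p)
      ≤ ∫⁻ y in S, ENNReal.ofReal ((4 * M) * ‖y‖ ^ (-p)) := setLIntegral_mono' hSmeas hpt
    _ = ∫⁻ y in S, ENNReal.ofReal (4 * M) * ENNReal.ofReal (‖y‖ ^ (-p)) := by
        simp_rw [ENNReal.ofReal_mul (by positivity : (0:ℝ) ≤ 4 * M)]
    _ = ENNReal.ofReal (4 * M) * ∫⁻ y in S, ENNReal.ofReal (‖y‖ ^ (-p)) :=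
        lintegral_const_mul' _ _ ENNReal.ofReal_ne_top
    _ = ENNReal.ofReal (4 * M) * (ENNReal.ofReal ((2 * ‖x‖) ^ ((n:ℝ) - p)) * I₀) := by
        rw [hS, tail_lintegral p hR]
    _ ≤ ENNReal.ofReal ((4 * I₀.toReal + 1) * jbr x ^ (-((n : ℝ) + 4 * s))) := by
        rw [hItR, ← ENNReal.ofReal_mul (Real.rpow_nonneg hR.le _), ← ENNReal.ofReal_mul
          (by positivity)]
        apply ENNReal.ofReal_le_ofReal
        rw [ENNReal.toReal_ofReal ENNReal.toReal_nonneg]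
        have hnp : (n:ℝ) - p = -(2 * s) := by rw [hp]; ring
        have h1 : (2 * ‖x‖) ^ ((n:ℝ) - p) ≤ jbr x ^ (-(2 * s)) := by
          rw [hnp]
          exact Real.rpow_le_rpow_of_nonpos (jbr_pos x) (jbr_le (by linarith)) (by linarith)
        have h2 : M * jbr x ^ (-(2 * s)) = jbr x ^ (-((n : ℝ) + 4 * s)) := by
          rw [hM, ← Real.rpow_add (jbr_pos x), hp]
          ring_nf
        have h3 : (0:ℝ) ≤ jbr x ^ (-((n : ℝ) + 4 * s)) := Real.rpow_nonneg (jbr_pos x).le _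
        have h4 : (0:ℝ) ≤ I₀.toReal := ENNReal.toReal_nonneg
        have h5 : M * (2 * ‖x‖) ^ ((n:ℝ) - p) ≤ jbr x ^ (-((n : ℝ) + 4 * s)) := by
          calc M * (2 * ‖x‖) ^ ((n:ℝ) - p) ≤ M * jbr x ^ (-(2 * s)) := by
                apply mul_le_mul_of_nonneg_left h1 hM0
            _ = _ := h2
        have h6 : (0:ℝ) ≤ M * (2 * ‖x‖) ^ ((n:ℝ) - p) := by positivity
        nlinarith [mul_le_mul_of_nonneg_right h5 h4]
end

section
/- Let n ≥ 1 and s ∈ (0,1). Set ⟨x⟩ = (1 + (|x| - 1)^4)^{1/4} for x ∈ ℝⁿ, and define φ : ℝⁿ → ℝ by φ(x) = 1 if |x| ≤ 1 and φ(x) = ⟨x⟩^{-n-2s} if |x| ≥ 1. Then there exists a constant C > 0 (depending only on n and s) such that for every x ∈ ℝⁿ with |x| ≥ 2, ∫_{|x|/2 ≤ |y| ≤ 2|x|} |φ(x+y) + φ(x-y) - 2φ(x)| / |y|^{n+2s} dy ≤ C |x|^{-n-2s}. -/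
open MeasureTheory Real Set

namespace S10
variable {n : ℕ} {s : ℝ}

lemma base_pos (x : EuclideanSpace ℝ (Fin n)) : (0:ℝ) < 1 + (‖x‖ - 1) ^ 4 := by positivity

lemma jbr_pos (x : EuclideanSpace ℝ (Fin n)) : 0 < jbr x :=
  Real.rpow_pos_of_pos (base_pos x) _

lemma jbr_ge {x : EuclideanSpace ℝ (Fin n)} {a : ℝ} (ha : 0 ≤ a)
    (h : a ^ 4 ≤ 1 + (‖x‖ - 1) ^ 4) : a ≤ jbr x := by
  have h1 : (a ^ (4:ℕ) : ℝ) ^ ((1:ℝ)/4) ≤ jbr x :=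
    Real.rpow_le_rpow (by positivity) h (by norm_num)
  calc a = (a ^ (4:ℕ) : ℝ) ^ ((1:ℝ)/4) := by
        rw [← Real.rpow_natCast a 4, ← Real.rpow_mul ha]
        norm_num
    _ ≤ jbr x := h1

lemma one_le_jbr (x : EuclideanSpace ℝ (Fin n)) : 1 ≤ jbr x :=
  jbr_ge zero_le_one (by nlinarith [sq_nonneg ((‖x‖-1)^2)])

lemma phi_nonneg (x : EuclideanSpace ℝ (Fin n)) : 0 ≤ phi n s x := by
  unfold phi; split
  · norm_num
  · exact (Real.rpow_pos_of_pos (jbr_pos x) _).le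

lemma phi_le_of_jbr_ge (hq : 0 ≤ (n:ℝ) + 2 * s) {x : EuclideanSpace ℝ (Fin n)} {a : ℝ}
    (ha : 0 < a) (hja : a ≤ jbr x) (hx : ¬ ‖x‖ ≤ 1) :
    phi n s x ≤ a ^ (-((n:ℝ) + 2 * s)) := by
  unfold phi
  rw [if_neg hx]
  exact Real.rpow_le_rpow_of_nonpos ha hja (by linarith)

lemma continuous_jbr : Continuous fun x : EuclideanSpace ℝ (Fin n) => jbr x := by
  unfold jbr
  exact (by fun_prop : Continuous fun x : EuclideanSpace ℝ (Fin n) => 1 + (‖x‖ - 1) ^ 4).rpow_const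
    (fun x => Or.inr (by norm_num))

lemma measurable_phi : Measurable (phi n s) := by
  unfold phi
  refine Measurable.ite (measurableSet_le (by fun_prop) measurable_const) measurable_const ?_
  exact (continuous_jbr.rpow_const fun x => Or.inl (jbr_pos x).ne').measurable

lemma half_rpow_neg {t : ℝ} (ht : 0 ≤ t) (q : ℝ) :
    (t / 2) ^ (-q) = 2 ^ q * t ^ (-q) := by
  rw [Real.div_rpow ht (by norm_num), Real.rpow_neg (by norm_num : (0:ℝ) ≤ 2)]
  field_simp

lemma quarter_rpow_neg {t : ℝ} (ht : 0 ≤ t) (q : ℝ) :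
    (t / 4) ^ (-q) = 4 ^ q * t ^ (-q) := by
  rw [Real.div_rpow ht (by norm_num), Real.rpow_neg (by norm_num : (0:ℝ) ≤ 4)]
  field_simp

/-- Global bound `φ(x) ≤ 4^q (1+|x|)^{-q}`. -/
lemma phi_le_global (hq : 0 ≤ (n:ℝ) + 2 * s) (x : EuclideanSpace ℝ (Fin n)) :
    phi n s x ≤ 4 ^ ((n:ℝ) + 2 * s) * (1 + ‖x‖) ^ (-((n:ℝ) + 2 * s)) := by
  have ht : (0:ℝ) ≤ ‖x‖ := norm_nonneg x
  rw [← quarter_rpow_neg (by linarith : (0:ℝ) ≤ 1 + ‖x‖)]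
  by_cases hx : ‖x‖ ≤ 1
  · have h1 : phi n s x = 1 := by unfold phi; rw [if_pos hx]
    rw [h1]
    exact Real.one_le_rpow_of_pos_of_le_one_of_nonpos (by linarith) (by linarith) (by linarith)
  · refine phi_le_of_jbr_ge hq (by linarith) ?_ hx
    push_neg at hx
    exact jbr_ge (by linarith) (by nlinarith [sq_nonneg (‖x‖ - 1), sq_nonneg ((‖x‖-1)^2 - 1), sq_nonneg ((‖x‖-1)^2)])

/-- For `|x| ≥ 2`, `φ(x) ≤ 2^q |x|^{-q}`. -/
lemma phi_le_far (hq : 0 ≤ (n:ℝ) + 2 * s) {x : EuclideanSpace ℝ (Fin n)} (hx : 2 ≤ ‖x‖) :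
    phi n s x ≤ 2 ^ ((n:ℝ) + 2 * s) * ‖x‖ ^ (-((n:ℝ) + 2 * s)) := by
  rw [← half_rpow_neg (norm_nonneg x)]
  refine phi_le_of_jbr_ge hq (by linarith) ?_ (by linarith)
  exact jbr_ge (by linarith) (by nlinarith [sq_nonneg (‖x‖ - 2), sq_nonneg ‖x‖, sq_nonneg (‖x‖*(‖x‖-2))])

lemma lintegral_phi_lt_top (hs : 0 < s) :
    ∫⁻ x : EuclideanSpace ℝ (Fin n), ENNReal.ofReal (phi n s x) < ⊤ := by
  have hq : (0:ℝ) ≤ (n:ℝ) + 2 * s := by positivity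
  have hint : Integrable
      (fun x : EuclideanSpace ℝ (Fin n) =>
        4 ^ ((n:ℝ) + 2 * s) * (1 + ‖x‖) ^ (-((n:ℝ) + 2 * s))) := by
    refine Integrable.const_mul ?_ _
    refine integrable_one_add_norm ?_
    simp only [finrank_euclideanSpace_fin]
    linarith
  calc ∫⁻ x : EuclideanSpace ℝ (Fin n), ENNReal.ofReal (phi n s x)
      ≤ ∫⁻ x : EuclideanSpace ℝ (Fin n),
          ENNReal.ofReal (4 ^ ((n:ℝ) + 2 * s) * (1 + ‖x‖) ^ (-((n:ℝ) + 2 * s))) :=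
        lintegral_mono fun x => ENNReal.ofReal_le_ofReal (phi_le_global hq x)
    _ < ⊤ := by
        rw [lt_top_iff_ne_top,
          lintegral_ofReal_ne_top_iff_integrable hint.aestronglyMeasurable
            (Filter.Eventually.of_forall fun x => by positivity)]
        exact hint

end S10

namespace S10
variable {n : ℕ} {s : ℝ}

lemma pointwise_bound (hq : 0 < (n:ℝ) + 2 * s) {x y : EuclideanSpace ℝ (Fin n)}
    (hx : 2 ≤ ‖x‖) (hy : ‖x‖ / 2 ≤ ‖y‖) :
    |phi n s (x + y) + phi n s (x - y) - 2 * phi n s x| / ‖y‖ ^ ((n:ℝ) + 2 * s)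
      ≤ (2 ^ ((n:ℝ) + 2 * s) * ‖x‖ ^ (-((n:ℝ) + 2 * s))) *
        (phi n s (x + y) + phi n s (x - y) + 2 * phi n s x) := by
  have ha := phi_nonneg (s := s) (x + y)
  have hb := phi_nonneg (s := s) (x - y)
  have hc := phi_nonneg (s := s) x
  have hnum : |phi n s (x + y) + phi n s (x - y) - 2 * phi n s x|
      ≤ phi n s (x + y) + phi n s (x - y) + 2 * phi n s x :=
    abs_le.mpr ⟨by linarith, by linarith⟩
  have hxp : (0:ℝ) < ‖x‖ / 2 := by linarith
  have hden : (‖x‖ / 2) ^ ((n:ℝ) + 2 * s) ≤ ‖y‖ ^ ((n:ℝ) + 2 * s) :=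
    Real.rpow_le_rpow hxp.le hy hq.le
  have hdenpos : 0 < (‖x‖ / 2) ^ ((n:ℝ) + 2 * s) := Real.rpow_pos_of_pos hxp _
  calc |phi n s (x + y) + phi n s (x - y) - 2 * phi n s x| / ‖y‖ ^ ((n:ℝ) + 2 * s)
      ≤ (phi n s (x + y) + phi n s (x - y) + 2 * phi n s x) / (‖x‖ / 2) ^ ((n:ℝ) + 2 * s) :=
        div_le_div₀ (by positivity) hnum hdenpos hden
    _ = (2 ^ ((n:ℝ) + 2 * s) * ‖x‖ ^ (-((n:ℝ) + 2 * s))) *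
        (phi n s (x + y) + phi n s (x - y) + 2 * phi n s x) := by
        rw [div_eq_mul_inv, ← Real.rpow_neg hxp.le, half_rpow_neg (norm_nonneg x)]
        ring

end S10

/-- For `n ≥ 1` and `s ∈ (0,1)`, there is a constant `C > 0` (depending only on
`n` and `s`) such that for every `x` with `|x| ≥ 2`,
`∫_{|x|/2 ≤ |y| ≤ 2|x|} |φ(x+y) + φ(x-y) - 2φ(x)| / |y|^{n+2s} dy
  ≤ C |x|^{-n-2s}`. -/
theorem stmt_10 (n : ℕ) (hn : 1 ≤ n) (s : ℝ) (hs : s ∈ Set.Ioo (0 : ℝ) 1) :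
    ∃ C : ℝ, 0 < C ∧ ∀ x : EuclideanSpace ℝ (Fin n), 2 ≤ ‖x‖ →
      ∫⁻ y in {y : EuclideanSpace ℝ (Fin n) | ‖x‖ / 2 ≤ ‖y‖ ∧ ‖y‖ ≤ 2 * ‖x‖},
          ENNReal.ofReal
            (|phi n s (x + y) + phi n s (x - y) - 2 * phi n s x| /
              ‖y‖ ^ ((n : ℝ) + 2 * s))
        ≤ ENNReal.ofReal (C * ‖x‖ ^ (-((n : ℝ) + 2 * s))) := by
  obtain ⟨hs0, hs1⟩ := hs
  have hq : (0:ℝ) < (n:ℝ) + 2 * s := by positivity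
  set J := ∫⁻ x : EuclideanSpace ℝ (Fin n), ENNReal.ofReal (phi n s x) with hJdef
  have hJ : J < ⊤ := S10.lintegral_phi_lt_top hs0
  set κ := volume (Metric.closedBall (0 : EuclideanSpace ℝ (Fin n)) 1) with hkdef
  have hκ : κ < ⊤ := measure_closedBall_lt_top
  set K : ENNReal := ENNReal.ofReal (2 ^ ((n:ℝ) + 2 * s)) *
      (2 * J + ENNReal.ofReal (2 ^ ((1:ℝ) + (n:ℝ) + ((n:ℝ) + 2 * s))) * κ) with hKdef
  have hK : K ≠ ⊤ := by
    refine ENNReal.mul_ne_top ENNReal.ofReal_ne_top (ENNReal.add_ne_top.mpr ⟨?_, ?_⟩)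
    · exact ENNReal.mul_ne_top (by norm_num) hJ.ne
    · exact ENNReal.mul_ne_top ENNReal.ofReal_ne_top hκ.ne
  refine ⟨K.toReal + 1, by positivity, ?_⟩
  intro x hx
  have hxpos : (0:ℝ) < ‖x‖ := by linarith
  set A := {y : EuclideanSpace ℝ (Fin n) | ‖x‖ / 2 ≤ ‖y‖ ∧ ‖y‖ ≤ 2 * ‖x‖} with hAdef
  have hm : Measurable fun z : EuclideanSpace ℝ (Fin n) => ENNReal.ofReal (phi n s z) :=
    ENNReal.measurable_ofReal.comp S10.measurable_phi
  have hm1 : Measurable fun y : EuclideanSpace ℝ (Fin n) => ENNReal.ofReal (phi n s (x + y)) :=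
    hm.comp (measurable_const.add measurable_id)
  have hm2 : Measurable fun y : EuclideanSpace ℝ (Fin n) => ENNReal.ofReal (phi n s (x - y)) :=
    hm.comp (measurable_const.sub measurable_id)
  have hc2q : (0:ℝ) ≤ 2 ^ ((n:ℝ) + 2 * s) * ‖x‖ ^ (-((n:ℝ) + 2 * s)) := by positivity
  -- step 1 : pointwise bound
  have step1 : ∫⁻ y in A, ENNReal.ofReal
        (|phi n s (x + y) + phi n s (x - y) - 2 * phi n s x| / ‖y‖ ^ ((n : ℝ) + 2 * s))
      ≤ ∫⁻ y in A, ENNReal.ofReal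
          ((2 ^ ((n:ℝ) + 2 * s) * ‖x‖ ^ (-((n:ℝ) + 2 * s))) *
            (phi n s (x + y) + phi n s (x - y) + 2 * phi n s x)) := by
    refine setLIntegral_mono' ?_ fun y hy =>
      ENNReal.ofReal_le_ofReal (S10.pointwise_bound hq hx hy.1)
    rw [hAdef, Set.setOf_and]
    exact (measurableSet_le measurable_const (by fun_prop)).inter
      (measurableSet_le (by fun_prop) measurable_const)
  -- step 2 : pull out the constant
  have step2 : ∫⁻ y in A, ENNReal.ofReal
        ((2 ^ ((n:ℝ) + 2 * s) * ‖x‖ ^ (-((n:ℝ) + 2 * s))) *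
          (phi n s (x + y) + phi n s (x - y) + 2 * phi n s x))
      = ENNReal.ofReal (2 ^ ((n:ℝ) + 2 * s) * ‖x‖ ^ (-((n:ℝ) + 2 * s))) *
        ∫⁻ y in A, ENNReal.ofReal
          (phi n s (x + y) + phi n s (x - y) + 2 * phi n s x) := by
    simp_rw [ENNReal.ofReal_mul hc2q]
    exact lintegral_const_mul' _ _ ENNReal.ofReal_ne_top
  -- step 3 : split the sum
  have step3 : ∫⁻ y in A, ENNReal.ofReal
        (phi n s (x + y) + phi n s (x - y) + 2 * phi n s x)
      ≤ (∫⁻ y in A, ENNReal.ofReal (phi n s (x + y)))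
        + (∫⁻ y in A, ENNReal.ofReal (phi n s (x - y)))
        + (∫⁻ _ in A, ENNReal.ofReal (2 * phi n s x)) := by
    calc ∫⁻ y in A, ENNReal.ofReal
          (phi n s (x + y) + phi n s (x - y) + 2 * phi n s x)
        ≤ ∫⁻ y in A, (ENNReal.ofReal (phi n s (x + y)) + ENNReal.ofReal (phi n s (x - y))
            + ENNReal.ofReal (2 * phi n s x)) :=
          lintegral_mono fun y =>
            le_trans ENNReal.ofReal_add_le (add_le_add ENNReal.ofReal_add_le le_rfl)
      _ = _ := by
          rw [lintegral_add_right _ measurable_const, lintegral_add_right _ hm2]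
  -- step 4 : the three bounds
  have h1 : (∫⁻ y in A, ENNReal.ofReal (phi n s (x + y))) ≤ J := by
    refine le_trans (setLIntegral_le_lintegral _ _) (le_of_eq ?_)
    exact lintegral_add_left_eq_self (fun z => ENNReal.ofReal (phi n s z)) x
  have h2 : (∫⁻ y in A, ENNReal.ofReal (phi n s (x - y))) ≤ J := by
    refine le_trans (setLIntegral_le_lintegral _ _) (le_of_eq ?_)
    exact (Measure.measurePreserving_sub_left volume x).lintegral_comp hm
  have hA_sub : A ⊆ Metric.closedBall 0 (2 * ‖x‖) := fun y hy =>
    mem_closedBall_zero_iff.mpr hy.2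
  have hvolA : volume A ≤ ENNReal.ofReal ((2 * ‖x‖) ^ n) * κ := by
    refine le_trans (measure_mono hA_sub) (le_of_eq ?_)
    rw [Measure.addHaar_closedBall' _ _ (by positivity)]
    simp only [finrank_euclideanSpace_fin]
    rfl
  have hreal : 2 * (2 ^ ((n:ℝ) + 2 * s) * ‖x‖ ^ (-((n:ℝ) + 2 * s))) * (2 * ‖x‖) ^ n
      ≤ 2 ^ ((1:ℝ) + (n:ℝ) + ((n:ℝ) + 2 * s)) := by
    have h5 : ‖x‖ ^ (-((n:ℝ) + 2 * s)) * ‖x‖ ^ (n:ℕ) = ‖x‖ ^ (-(2 * s)) := by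
      rw [← Real.rpow_natCast ‖x‖ n, ← Real.rpow_add hxpos]
      ring_nf
    have h6 : ‖x‖ ^ (-(2 * s)) ≤ 1 :=
      Real.rpow_le_one_of_one_le_of_nonpos (by linarith) (by linarith)
    have h7 : (2:ℝ) ^ ((1:ℝ) + (n:ℝ) + ((n:ℝ) + 2 * s))
        = 2 * 2 ^ (n:ℕ) * 2 ^ ((n:ℝ) + 2 * s) := by
      rw [Real.rpow_add two_pos, Real.rpow_add two_pos, Real.rpow_one, Real.rpow_natCast]
    calc 2 * (2 ^ ((n:ℝ) + 2 * s) * ‖x‖ ^ (-((n:ℝ) + 2 * s))) * (2 * ‖x‖) ^ n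
        = (2 * 2 ^ (n:ℕ) * 2 ^ ((n:ℝ) + 2 * s)) * (‖x‖ ^ (-((n:ℝ) + 2 * s)) * ‖x‖ ^ (n:ℕ)) := by
          rw [mul_pow]; ring
      _ ≤ (2 * 2 ^ (n:ℕ) * 2 ^ ((n:ℝ) + 2 * s)) * 1 := by
          refine mul_le_mul_of_nonneg_left ?_ (by positivity)
          rw [h5]; exact h6
      _ = 2 ^ ((1:ℝ) + (n:ℝ) + ((n:ℝ) + 2 * s)) := by rw [h7, mul_one]
  have h3 : (∫⁻ _ in A, ENNReal.ofReal (2 * phi n s x))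
      ≤ ENNReal.ofReal (2 ^ ((1:ℝ) + (n:ℝ) + ((n:ℝ) + 2 * s))) * κ := by
    rw [setLIntegral_const]
    calc ENNReal.ofReal (2 * phi n s x) * volume A
        ≤ ENNReal.ofReal (2 * (2 ^ ((n:ℝ) + 2 * s) * ‖x‖ ^ (-((n:ℝ) + 2 * s)))) *
            (ENNReal.ofReal ((2 * ‖x‖) ^ n) * κ) := by
          refine mul_le_mul' (ENNReal.ofReal_le_ofReal ?_) hvolA
          have := S10.phi_le_far (s := s) hq.le hx
          linarith
      _ = ENNReal.ofReal (2 * (2 ^ ((n:ℝ) + 2 * s) * ‖x‖ ^ (-((n:ℝ) + 2 * s))) * (2 * ‖x‖) ^ n)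
            * κ := by
          conv_rhs => rw [show ENNReal.ofReal
                (2 * (2 ^ ((n:ℝ) + 2 * s) * ‖x‖ ^ (-((n:ℝ) + 2 * s))) * (2 * ‖x‖) ^ n)
              = ENNReal.ofReal (2 * (2 ^ ((n:ℝ) + 2 * s) * ‖x‖ ^ (-((n:ℝ) + 2 * s)))) *
                ENNReal.ofReal ((2 * ‖x‖) ^ n) from ENNReal.ofReal_mul (by positivity)]
          ring
      _ ≤ ENNReal.ofReal (2 ^ ((1:ℝ) + (n:ℝ) + ((n:ℝ) + 2 * s))) * κ :=
          mul_le_mul' (ENNReal.ofReal_le_ofReal hreal) le_rfl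
  -- assemble
  calc ∫⁻ y in A, ENNReal.ofReal
        (|phi n s (x + y) + phi n s (x - y) - 2 * phi n s x| / ‖y‖ ^ ((n : ℝ) + 2 * s))
      ≤ ENNReal.ofReal (2 ^ ((n:ℝ) + 2 * s) * ‖x‖ ^ (-((n:ℝ) + 2 * s))) *
        ((∫⁻ y in A, ENNReal.ofReal (phi n s (x + y)))
          + (∫⁻ y in A, ENNReal.ofReal (phi n s (x - y)))
          + (∫⁻ _ in A, ENNReal.ofReal (2 * phi n s x))) := by
        refine le_trans step1 ?_
        rw [step2]
        exact mul_le_mul' le_rfl step3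
    _ ≤ ENNReal.ofReal (2 ^ ((n:ℝ) + 2 * s) * ‖x‖ ^ (-((n:ℝ) + 2 * s))) *
        (J + J + ENNReal.ofReal (2 ^ ((1:ℝ) + (n:ℝ) + ((n:ℝ) + 2 * s))) * κ) :=
        mul_le_mul' le_rfl (add_le_add (add_le_add h1 h2) h3)
    _ = ENNReal.ofReal (‖x‖ ^ (-((n:ℝ) + 2 * s))) * K := by
        rw [ENNReal.ofReal_mul (by positivity), hKdef, two_mul]
        ring
    _ ≤ ENNReal.ofReal (‖x‖ ^ (-((n:ℝ) + 2 * s))) * ENNReal.ofReal (K.toReal + 1) := by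
        refine mul_le_mul' le_rfl ?_
        rw [← ENNReal.ofReal_toReal hK]
        exact ENNReal.ofReal_le_ofReal (by
          rw [ENNReal.toReal_ofReal (ENNReal.toReal_nonneg)]
          linarith)
    _ = ENNReal.ofReal ((K.toReal + 1) * ‖x‖ ^ (-((n:ℝ) + 2 * s))) := by
        rw [ENNReal.ofReal_mul (by positivity), mul_comm]
end

section
/- Let n ≥ 1 and s ∈ (0,1). Set ⟨x⟩ = (1 + (|x| - 1)^4)^{1/4} for x ∈ ℝⁿ, and define φ : ℝⁿ → ℝ by φ(x) = 1 if |x| ≤ 1 and φ(x) = ⟨x⟩^{-n-2s} if |x| ≥ 1. Then there exists a constant C > 0 (depending only on n and s) such that for every x ∈ ℝⁿ with |x| ≥ 2, ∫_{|y| ≤ |x|/2} |φ(x+y) + φ(x-y) - 2φ(x)| / |y|^{n+2s} dy ≤ C ⟨x⟩^{-n-4s}. -/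
open MeasureTheory Real Set

open scoped ENNReal

namespace S11



variable (q : ℝ)

/-- `H r = 1 + (r-1)^4`. -/
def Hf (r : ℝ) : ℝ := 1 + (r - 1) ^ 4

noncomputable def gf (r : ℝ) : ℝ := Hf r ^ (-(q / 4))

noncomputable def gf1 (r : ℝ) : ℝ := -q * (r - 1) ^ 3 * Hf r ^ (-(q / 4) - 1)

noncomputable def gf2 (r : ℝ) : ℝ :=
  -q * (3 * (r - 1) ^ 2) * Hf r ^ (-(q / 4) - 1)
    + (-q * (r - 1) ^ 3) * (4 * (r - 1) ^ 3 * (-(q / 4) - 1) * Hf r ^ (-(q / 4) - 1 - 1))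

lemma Hf_pos (r : ℝ) : 0 < Hf r := by
  have := pow_nonneg (by positivity : (0:ℝ) ≤ (r-1)^2) 2
  unfold Hf; positivity

lemma one_le_Hf (r : ℝ) : 1 ≤ Hf r := by
  have : 0 ≤ (r - 1) ^ 4 := by positivity
  unfold Hf; linarith

lemma hasDerivAt_Hf (r : ℝ) : HasDerivAt Hf (4 * (r - 1) ^ 3) r := by
  have h : HasDerivAt (fun r : ℝ => 1 + (r - 1) ^ 4) (4 * (r - 1) ^ 3) r := by
    have h1 : HasDerivAt (fun r : ℝ => r - 1) 1 r := (hasDerivAt_id r).sub_const 1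
    have h2 := (h1.pow 4)
    simpa using (h2.const_add 1)
  exact h

lemma hasDerivAt_gf (r : ℝ) : HasDerivAt (gf q) (gf1 q r) r := by
  have h := (hasDerivAt_Hf r).rpow_const (p := -(q/4)) (Or.inl (Hf_pos r).ne')
  convert h using 1
  · rfl
  · unfold gf1; ring

lemma hasDerivAt_gf1 (r : ℝ) : HasDerivAt (gf1 q) (gf2 q r) r := by
  have h1 : HasDerivAt (fun r : ℝ => -q * (r - 1) ^ 3) (-q * (3 * (r - 1) ^ 2)) r := by
    have h : HasDerivAt (fun r : ℝ => r - 1) 1 r := (hasDerivAt_id r).sub_const 1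
    simpa [mul_comm, mul_assoc, mul_left_comm] using ((h.pow 3).const_mul (-q))
  have h2 : HasDerivAt (fun r : ℝ => Hf r ^ (-(q/4) - 1))
      (4 * (r - 1) ^ 3 * (-(q/4) - 1) * Hf r ^ (-(q/4) - 1 - 1)) r :=
    (hasDerivAt_Hf r).rpow_const (Or.inl (Hf_pos r).ne')
  have := h1.mul h2
  exact this

lemma aux_pow_le {r : ℝ} (hr : 1 ≤ r) (k : ℕ) : (r - 1) ^ k ≤ Hf r ^ ((k : ℝ) / 4) := by
  have ha : (0:ℝ) ≤ r - 1 := by linarith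
  have h1 : (r - 1) ^ k = ((r - 1) ^ 4) ^ ((k : ℝ) / 4) := by
    rw [← Real.rpow_natCast (r-1) 4, ← Real.rpow_mul ha,
      show ((4:ℕ):ℝ) * ((k:ℝ)/4) = (k:ℝ) by push_cast; ring, Real.rpow_natCast]
  rw [h1]
  apply Real.rpow_le_rpow (by positivity) (by unfold Hf; linarith) (by positivity)

lemma abs_gf1_le {r : ℝ} (hq : 0 < q) (hr : 1 ≤ r) :
    |gf1 q r| ≤ q * Hf r ^ (-((q + 1) / 4)) := by
  have hH := Hf_pos r
  have hX : (0:ℝ) ≤ Hf r ^ (-(q / 4) - 1) := rpow_nonneg hH.le _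
  have h1 : |gf1 q r| = q * (r - 1) ^ 3 * Hf r ^ (-(q / 4) - 1) := by
    unfold gf1
    rw [abs_mul, abs_mul, abs_neg, abs_of_pos hq,
      abs_of_nonneg (pow_nonneg (by linarith) 3), abs_of_nonneg hX]
  have key : (r - 1) ^ 3 ≤ Hf r ^ ((3:ℝ)/4) := by exact_mod_cast aux_pow_le hr 3
  rw [h1]
  calc q * (r - 1) ^ 3 * Hf r ^ (-(q / 4) - 1)
      ≤ q * Hf r ^ ((3:ℝ)/4) * Hf r ^ (-(q / 4) - 1) :=
        mul_le_mul_of_nonneg_right (mul_le_mul_of_nonneg_left key hq.le) hX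
    _ = q * (Hf r ^ ((3:ℝ)/4) * Hf r ^ (-(q / 4) - 1)) := by ring
    _ = q * Hf r ^ (-((q + 1) / 4)) := by
        rw [← Real.rpow_add hH, show (3:ℝ)/4 + (-(q/4) - 1) = -((q+1)/4) by ring]

lemma abs_gf2_le {r : ℝ} (hq : 0 < q) (hr : 1 ≤ r) :
    |gf2 q r| ≤ (3 * q + q * (q + 4)) * Hf r ^ (-((q + 2) / 4)) := by
  have hH := Hf_pos r
  have ha : (0:ℝ) ≤ r - 1 := by linarith
  have hX : (0:ℝ) ≤ Hf r ^ (-(q / 4) - 1) := rpow_nonneg hH.le _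
  have hX2 : (0:ℝ) ≤ Hf r ^ (-(q / 4) - 1 - 1) := rpow_nonneg hH.le _
  have e1 : |(-q * (3 * (r - 1) ^ 2) * Hf r ^ (-(q / 4) - 1))|
      ≤ 3 * q * Hf r ^ (-((q + 2) / 4)) := by
    rw [abs_mul, abs_mul, abs_neg, abs_of_pos hq,
      abs_of_nonneg (by positivity : (0:ℝ) ≤ 3 * (r-1)^2), abs_of_nonneg hX]
    have key : (r - 1) ^ 2 ≤ Hf r ^ ((2:ℝ)/4) := by exact_mod_cast aux_pow_le hr 2
    calc q * (3 * (r - 1) ^ 2) * Hf r ^ (-(q / 4) - 1)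
        ≤ q * (3 * Hf r ^ ((2:ℝ)/4)) * Hf r ^ (-(q / 4) - 1) := by
          apply mul_le_mul_of_nonneg_right _ hX
          apply mul_le_mul_of_nonneg_left _ hq.le
          linarith
      _ = 3 * q * (Hf r ^ ((2:ℝ)/4) * Hf r ^ (-(q / 4) - 1)) := by ring
      _ = 3 * q * Hf r ^ (-((q + 2) / 4)) := by
          rw [← Real.rpow_add hH, show (2:ℝ)/4 + (-(q/4) - 1) = -((q+2)/4) by ring]
  have e2 : |(-q * (r - 1) ^ 3) * (4 * (r - 1) ^ 3 * (-(q / 4) - 1) * Hf r ^ (-(q / 4) - 1 - 1))|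
      ≤ q * (q + 4) * Hf r ^ (-((q + 2) / 4)) := by
    have hrw : (-q * (r - 1) ^ 3) * (4 * (r - 1) ^ 3 * (-(q / 4) - 1) * Hf r ^ (-(q / 4) - 1 - 1))
        = q * (q + 4) * (r - 1) ^ 6 * Hf r ^ (-(q / 4) - 1 - 1) := by ring
    rw [hrw, abs_mul, abs_of_nonneg hX2, abs_mul, abs_mul,
      abs_of_pos hq, abs_of_nonneg (by linarith : (0:ℝ) ≤ q + 4),
      abs_of_nonneg (pow_nonneg ha 6)]
    have key : (r - 1) ^ 6 ≤ Hf r ^ ((6:ℝ)/4) := by exact_mod_cast aux_pow_le hr 6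
    calc q * (q + 4) * (r - 1) ^ 6 * Hf r ^ (-(q / 4) - 1 - 1)
        ≤ q * (q + 4) * Hf r ^ ((6:ℝ)/4) * Hf r ^ (-(q / 4) - 1 - 1) := by
          apply mul_le_mul_of_nonneg_right _ hX2
          exact mul_le_mul_of_nonneg_left key (by positivity)
      _ = q * (q + 4) * (Hf r ^ ((6:ℝ)/4) * Hf r ^ (-(q / 4) - 1 - 1)) := by ring
      _ = q * (q + 4) * Hf r ^ (-((q + 2) / 4)) := by
          rw [← Real.rpow_add hH, show (6:ℝ)/4 + (-(q/4) - 1 - 1) = -((q+2)/4) by ring]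
  calc |gf2 q r| ≤ _ + _ := abs_add_le _ _
    _ ≤ 3 * q * Hf r ^ (-((q + 2) / 4)) + q * (q + 4) * Hf r ^ (-((q + 2) / 4)) :=
        add_le_add e1 e2
    _ = (3 * q + q * (q + 4)) * Hf r ^ (-((q + 2) / 4)) := by ring

lemma Hf_rpow_quarter_le {r : ℝ} (hr : 1 ≤ r) : Hf r ^ ((1:ℝ)/4) ≤ 2 * r := by
  have h1 : Hf r ≤ 16 * r ^ 4 := by
    have h2 : (r - 1) ^ 4 ≤ r ^ 4 := by
      apply pow_le_pow_left₀ (by linarith) (by linarith)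
    have h3 : (1:ℝ) ≤ r ^ 4 := by nlinarith [sq_nonneg r, sq_nonneg (r^2)]
    unfold Hf; linarith
  calc Hf r ^ ((1:ℝ)/4) ≤ (16 * r ^ 4) ^ ((1:ℝ)/4) :=
        Real.rpow_le_rpow (Hf_pos r).le h1 (by norm_num)
    _ = 2 * r := by
        rw [Real.mul_rpow (by norm_num) (by positivity),
          show (16:ℝ) = 2 ^ (4:ℕ) by norm_num, ← Real.rpow_natCast 2 4,
          ← Real.rpow_natCast r 4, ← Real.rpow_mul (by norm_num), ← Real.rpow_mul (by linarith)]
        norm_num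

lemma abs_gf1_le' {r : ℝ} (hq : 0 < q) (hr : 1 ≤ r) :
    |gf1 q r| ≤ 2 * q * r * Hf r ^ (-((q + 2) / 4)) := by
  have hH := Hf_pos r
  calc |gf1 q r| ≤ q * Hf r ^ (-((q + 1) / 4)) := abs_gf1_le q hq hr
    _ = q * (Hf r ^ ((1:ℝ)/4) * Hf r ^ (-((q + 2) / 4))) := by
        rw [← Real.rpow_add hH, show (1:ℝ)/4 + (-((q+2)/4)) = -((q+1)/4) by ring]
    _ ≤ q * (2 * r * Hf r ^ (-((q + 2) / 4))) := by
        apply mul_le_mul_of_nonneg_left _ hq.le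
        exact mul_le_mul_of_nonneg_right (Hf_rpow_quarter_le hr) (rpow_nonneg hH.le _)
    _ = 2 * q * r * Hf r ^ (-((q + 2) / 4)) := by ring

def Pf (a b c : ℝ) : ℝ → ℝ := fun t => a + b * t + c * t ^ 2
noncomputable def rf (a b c : ℝ) : ℝ → ℝ := fun t => Real.sqrt (Pf a b c t)
noncomputable def rf1 (a b c : ℝ) : ℝ → ℝ := fun t => (b + 2 * c * t) / (2 * rf a b c t)
noncomputable def rf2 (a b c : ℝ) : ℝ → ℝ := fun t =>
  (2 * c * (2 * rf a b c t) - (b + 2 * c * t) * (2 * rf1 a b c t)) / (2 * rf a b c t) ^ 2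

lemma hasDerivAt_Pf (a b c t : ℝ) : HasDerivAt (Pf a b c) (b + 2 * c * t) t := by
  have hb : HasDerivAt (fun t : ℝ => a + b * t) b t := by
    simpa using ((hasDerivAt_id t).const_mul b).const_add a
  have hc : HasDerivAt (fun t : ℝ => c * t ^ 2) (c * (2 * t)) t := by
    have := (hasDerivAt_pow 2 t).const_mul c
    simpa using this
  have := hb.add hc
  convert this using 1
  · rfl
  · rfl
  · rfl
  · ring

lemma Pf_ne_zero {a b c t : ℝ} (h : rf a b c t ≠ 0) : Pf a b c t ≠ 0 := by
  intro h0
  apply h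
  simp [rf, h0]

lemma hasDerivAt_rf {a b c t : ℝ} (h : rf a b c t ≠ 0) :
    HasDerivAt (rf a b c) (rf1 a b c t) t := by
  have := (hasDerivAt_Pf a b c t).sqrt (Pf_ne_zero h)
  exact this

lemma hasDerivAt_rf1 {a b c t : ℝ} (h : rf a b c t ≠ 0) :
    HasDerivAt (rf1 a b c) (rf2 a b c t) t := by
  have hu : HasDerivAt (fun t : ℝ => b + 2 * c * t) (2 * c) t := by
    simpa using ((hasDerivAt_id t).const_mul (2 * c)).const_add b
  have hv : HasDerivAt (fun t : ℝ => 2 * rf a b c t) (2 * rf1 a b c t) t :=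
    (hasDerivAt_rf h).const_mul 2
  have hvne : 2 * rf a b c t ≠ 0 := by
    simpa using h
  exact hu.div hv hvne

noncomputable def psi (q a b c : ℝ) : ℝ → ℝ := fun t => gf q (rf a b c t)
noncomputable def psi1 (q a b c : ℝ) : ℝ → ℝ := fun t => gf1 q (rf a b c t) * rf1 a b c t
noncomputable def psi2 (q a b c : ℝ) : ℝ → ℝ := fun t =>
  gf2 q (rf a b c t) * rf1 a b c t * rf1 a b c t + gf1 q (rf a b c t) * rf2 a b c t

lemma hasDerivAt_psi {q a b c t : ℝ} (h : rf a b c t ≠ 0) :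
    HasDerivAt (psi q a b c) (psi1 q a b c t) t := by
  have := (hasDerivAt_gf q (rf a b c t)).comp t (hasDerivAt_rf h)
  exact this

lemma hasDerivAt_psi1 {q a b c t : ℝ} (h : rf a b c t ≠ 0) :
    HasDerivAt (psi1 q a b c) (psi2 q a b c t) t := by
  have h1 := (hasDerivAt_gf1 q (rf a b c t)).comp t (hasDerivAt_rf h)
  have h2 := (show HasDerivAt (fun t => gf1 q (rf a b c t)) (gf2 q (rf a b c t) * rf1 a b c t) t by
    exact h1).mul (hasDerivAt_rf1 h)
  exact h2

lemma Hf_comp {R r : ℝ} (hR : 2 ≤ R) (hr : R / 2 ≤ r) : Hf R ≤ 256 * Hf r := by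
  have h1 := one_le_Hf r
  rcases le_or_gt R 3 with h | h
  · have h2a : (R - 1) ^ 2 ≤ 4 := by nlinarith
    have h2 : (R - 1) ^ 4 ≤ 16 := by nlinarith [sq_nonneg (R - 1)]
    unfold Hf at *
    nlinarith
  · have h3 : (R - 1) / 4 ≤ r - 1 := by linarith
    have h4 : ((R - 1) / 4) ^ 4 ≤ (r - 1) ^ 4 := by
      apply pow_le_pow_left₀ (by linarith) h3
    unfold Hf at *
    nlinarith


lemma psi2_bound {n : ℕ} {q : ℝ} (hq : 0 < q) (x y : EuclideanSpace ℝ (Fin n))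
    (hx : 2 ≤ ‖x‖) (hy : ‖y‖ ≤ ‖x‖ / 2) {t : ℝ} (ht : |t| ≤ 1) :
    rf (‖x‖^2) (2 * (inner ℝ x y : ℝ)) (‖y‖^2) t = ‖x + t • y‖ ∧
    1 ≤ ‖x + t • y‖ ∧
    |psi2 q (‖x‖^2) (2 * (inner ℝ x y : ℝ)) (‖y‖^2) t|
      ≤ ((3 * q + q * (q + 4)) + 4 * q) * (256 ^ ((q+2)/4) * Hf ‖x‖ ^ (-((q + 2) / 4))) * ‖y‖^2 := by
  set a := ‖x‖^2
  set b := 2 * (inner ℝ x y : ℝ)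
  set c := ‖y‖^2
  have hPval : Pf a b c t = ‖x + t • y‖ ^ 2 := by
    rw [@norm_add_sq_real]
    simp only [Pf, a, b, c, real_inner_smul_right, norm_smul, Real.norm_eq_abs]
    rw [mul_pow, sq_abs]
    ring
  have hrval : rf a b c t = ‖x + t • y‖ := by
    rw [rf]; simp only [hPval]
    exact Real.sqrt_sq (norm_nonneg _)
  have hnorm_low : ‖x‖ / 2 ≤ ‖x + t • y‖ := by
    have h1 : ‖x‖ ≤ ‖x + t • y‖ + ‖t • y‖ := by
      calc ‖x‖ = ‖(x + t • y) - t • y‖ := by rw [add_sub_cancel_right]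
        _ ≤ ‖x + t • y‖ + ‖t • y‖ := norm_sub_le _ _
    have h2 : ‖t • y‖ ≤ ‖y‖ := by
      rw [norm_smul, Real.norm_eq_abs]
      calc |t| * ‖y‖ ≤ 1 * ‖y‖ := mul_le_mul_of_nonneg_right ht (norm_nonneg _)
        _ = ‖y‖ := one_mul _
    linarith
  have hrlow : ‖x‖ / 2 ≤ rf a b c t := by rw [hrval]; exact hnorm_low
  have hrpos : 0 < rf a b c t := by linarith
  have hr1 : 1 ≤ rf a b c t := by linarith
  refine ⟨hrval, by rw [← hrval]; exact hr1, ?_⟩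
  -- bound |b + 2 c t|
  have hinner : b + 2 * c * t = 2 * (inner ℝ (x + t • y) y : ℝ) := by
    rw [inner_add_left, real_inner_smul_left, real_inner_self_eq_norm_sq]
    simp only [b, c]; ring
  have habs : |b + 2 * c * t| ≤ 2 * rf a b c t * ‖y‖ := by
    rw [hinner, abs_mul]
    rw [hrval]
    calc |(2:ℝ)| * |(inner ℝ (x + t • y) y : ℝ)| ≤ 2 * (‖x + t • y‖ * ‖y‖) := by
          rw [abs_two]
          exact mul_le_mul_of_nonneg_left (abs_real_inner_le_norm _ _) (by norm_num)
      _ = 2 * ‖x + t • y‖ * ‖y‖ := by ring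
  have hr1b : |rf1 a b c t| ≤ ‖y‖ := by
    rw [rf1, abs_div, abs_of_pos (by linarith : (0:ℝ) < 2 * rf a b c t)]
    rw [div_le_iff₀ (by linarith)]
    calc |b + 2 * c * t| ≤ 2 * rf a b c t * ‖y‖ := habs
      _ = ‖y‖ * (2 * rf a b c t) := by ring
  have hr2b : |rf2 a b c t| ≤ 2 * ‖y‖ ^ 2 / rf a b c t := by
    rw [rf2, abs_div, abs_of_pos (by positivity : (0:ℝ) < (2 * rf a b c t)^2)]
    rw [div_le_div_iff₀ (by positivity) hrpos]
    have h1 : |2 * c * (2 * rf a b c t) - (b + 2 * c * t) * (2 * rf1 a b c t)|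
        ≤ 4 * c * rf a b c t + 4 * rf a b c t * ‖y‖ * ‖y‖ := by
      calc |2 * c * (2 * rf a b c t) - (b + 2 * c * t) * (2 * rf1 a b c t)|
          ≤ |2 * c * (2 * rf a b c t)| + |(b + 2 * c * t) * (2 * rf1 a b c t)| := abs_sub _ _
        _ ≤ 4 * c * rf a b c t + 4 * rf a b c t * ‖y‖ * ‖y‖ := by
            have e1 : |2 * c * (2 * rf a b c t)| = 4 * c * rf a b c t := by
              rw [abs_of_nonneg]; · ring
              have : (0:ℝ) ≤ c := by positivity
              nlinarith
            have e2 : |(b + 2 * c * t) * (2 * rf1 a b c t)| ≤ 4 * rf a b c t * ‖y‖ * ‖y‖ := by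
              rw [abs_mul, abs_mul, abs_two]
              calc |b + 2 * c * t| * (2 * |rf1 a b c t|)
                  ≤ (2 * rf a b c t * ‖y‖) * (2 * ‖y‖) := by
                    apply mul_le_mul habs (by linarith) (by positivity)
                    nlinarith [norm_nonneg y]
                _ = 4 * rf a b c t * ‖y‖ * ‖y‖ := by ring
            linarith
    calc |2 * c * (2 * rf a b c t) - (b + 2 * c * t) * (2 * rf1 a b c t)| * rf a b c t
        ≤ (4 * c * rf a b c t + 4 * rf a b c t * ‖y‖ * ‖y‖) * rf a b c t :=
          mul_le_mul_of_nonneg_right h1 hrpos.le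
      _ = 2 * ‖y‖ ^ 2 * (2 * rf a b c t) ^ 2 := by simp only [c]; ring
      _ ≤ 2 * ‖y‖ ^ 2 * (2 * rf a b c t) ^ 2 := le_refl _
  -- Hf comparison
  have hHcomp : Hf (rf a b c t) ^ (-((q+2)/4)) ≤ 256 ^ ((q+2)/4) * Hf ‖x‖ ^ (-((q + 2) / 4)) := by
    have h1 : Hf ‖x‖ / 256 ≤ Hf (rf a b c t) := by
      have := Hf_comp hx hrlow
      linarith
    have h2 : (0:ℝ) < Hf ‖x‖ / 256 := by
      have := Hf_pos ‖x‖; linarith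
    calc Hf (rf a b c t) ^ (-((q+2)/4)) ≤ (Hf ‖x‖ / 256) ^ (-((q+2)/4)) :=
          Real.rpow_le_rpow_of_nonpos h2 h1 (neg_nonpos.mpr (by positivity))
      _ = 256 ^ ((q+2)/4) * Hf ‖x‖ ^ (-((q + 2) / 4)) := by
          rw [Real.div_rpow (Hf_pos ‖x‖).le (by norm_num), Real.rpow_neg (by norm_num : (0:ℝ) ≤ 256),
            Real.rpow_neg (Hf_pos ‖x‖).le, inv_div_inv, div_eq_mul_inv]
  -- final
  have hg2 := abs_gf2_le q hq hr1
  have hg1 := abs_gf1_le' q hq hr1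
  have hHnn : (0:ℝ) ≤ Hf (rf a b c t) ^ (-((q+2)/4)) := rpow_nonneg (Hf_pos _).le _
  have term1 : |gf2 q (rf a b c t) * rf1 a b c t * rf1 a b c t|
      ≤ (3 * q + q * (q + 4)) * Hf (rf a b c t) ^ (-((q+2)/4)) * ‖y‖^2 := by
    rw [abs_mul, abs_mul]
    calc |gf2 q (rf a b c t)| * |rf1 a b c t| * |rf1 a b c t|
        ≤ ((3 * q + q * (q + 4)) * Hf (rf a b c t) ^ (-((q+2)/4))) * ‖y‖ * ‖y‖ := by
          apply mul_le_mul _ hr1b (abs_nonneg _) _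
          · exact mul_le_mul hg2 hr1b (abs_nonneg _) (by positivity)
          · positivity
      _ = (3 * q + q * (q + 4)) * Hf (rf a b c t) ^ (-((q+2)/4)) * ‖y‖^2 := by ring
  have term2 : |gf1 q (rf a b c t) * rf2 a b c t|
      ≤ 4 * q * Hf (rf a b c t) ^ (-((q+2)/4)) * ‖y‖^2 := by
    rw [abs_mul]
    calc |gf1 q (rf a b c t)| * |rf2 a b c t|
        ≤ (2 * q * rf a b c t * Hf (rf a b c t) ^ (-((q+2)/4))) * (2 * ‖y‖ ^ 2 / rf a b c t) := by
          apply mul_le_mul hg1 hr2b (abs_nonneg _) (by positivity)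
      _ = 4 * q * Hf (rf a b c t) ^ (-((q+2)/4)) * ‖y‖^2 := by
          field_simp
          ring
  have hsum : |psi2 q a b c t|
      ≤ ((3 * q + q * (q + 4)) + 4 * q) * Hf (rf a b c t) ^ (-((q+2)/4)) * ‖y‖^2 := by
    calc |psi2 q a b c t| ≤ _ + _ := abs_add_le _ _
      _ ≤ (3 * q + q * (q + 4)) * Hf (rf a b c t) ^ (-((q+2)/4)) * ‖y‖^2
            + 4 * q * Hf (rf a b c t) ^ (-((q+2)/4)) * ‖y‖^2 := add_le_add term1 term2
      _ = ((3 * q + q * (q + 4)) + 4 * q) * Hf (rf a b c t) ^ (-((q+2)/4)) * ‖y‖^2 := by ring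
  calc |psi2 q a b c t|
      ≤ ((3 * q + q * (q + 4)) + 4 * q) * Hf (rf a b c t) ^ (-((q+2)/4)) * ‖y‖^2 := hsum
    _ ≤ ((3 * q + q * (q + 4)) + 4 * q) * (256 ^ ((q+2)/4) * Hf ‖x‖ ^ (-((q + 2) / 4))) * ‖y‖^2 := by
        apply mul_le_mul_of_nonneg_right _ (by positivity)
        exact mul_le_mul_of_nonneg_left hHcomp (by positivity)

lemma secondDiff_bound {n : ℕ} {q : ℝ} (hq : 0 < q) (x y : EuclideanSpace ℝ (Fin n))
    (hx : 2 ≤ ‖x‖) (hy : ‖y‖ ≤ ‖x‖ / 2) :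
    |gf q ‖x + y‖ + gf q ‖x - y‖ - 2 * gf q ‖x‖|
      ≤ 2 * ((3 * q + q * (q + 4) + 4 * q) * (256 ^ ((q+2)/4) * Hf ‖x‖ ^ (-((q + 2) / 4)))) * ‖y‖^2 := by
  set a := ‖x‖^2 with ha
  set b := 2 * (inner ℝ x y : ℝ) with hb
  set c := ‖y‖^2 with hc
  set M := (3 * q + q * (q + 4) + 4 * q) * (256 ^ ((q+2)/4) * Hf ‖x‖ ^ (-((q + 2) / 4))) with hM
  have hMy : 0 ≤ M * ‖y‖^2 := by
    have h0 : (0:ℝ) ≤ 3 * q + q * (q + 4) + 4 * q := by nlinarith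
    have h1 : (0:ℝ) ≤ (256:ℝ) ^ ((q+2)/4) := rpow_nonneg (by norm_num) _
    have h2 : (0:ℝ) ≤ Hf ‖x‖ ^ (-((q + 2) / 4)) := rpow_nonneg (Hf_pos _).le _
    have h3 : (0:ℝ) ≤ ‖y‖^2 := by positivity
    exact mul_nonneg (mul_nonneg h0 (mul_nonneg h1 h2)) h3
  have hkey : ∀ t : ℝ, |t| ≤ 1 → rf a b c t = ‖x + t • y‖ ∧ 1 ≤ ‖x + t • y‖ ∧
      |psi2 q a b c t| ≤ M * ‖y‖^2 := fun t ht => psi2_bound hq x y hx hy ht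
  have hrne : ∀ t : ℝ, |t| ≤ 1 → rf a b c t ≠ 0 := by
    intro t ht
    have h := hkey t ht
    rw [h.1]
    intro h0
    rw [h0] at h
    linarith [h.2.1]
  have hψd : ∀ t : ℝ, |t| ≤ 1 → HasDerivAt (psi q a b c) (psi1 q a b c t) t :=
    fun t ht => hasDerivAt_psi (hrne t ht)
  have hD1d : ∀ t : ℝ, |t| ≤ 1 → HasDerivAt (psi1 q a b c) (psi2 q a b c t) t :=
    fun t ht => hasDerivAt_psi1 (hrne t ht)
  have step1 : ∀ t ∈ Icc (0:ℝ) 1, |psi1 q a b c t - psi1 q a b c (-t)| ≤ 2 * (M * ‖y‖^2) := by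
    rintro t ⟨ht0, ht1⟩
    have hder : ∀ u ∈ Icc (-t) t, HasDerivWithinAt (psi1 q a b c) (psi2 q a b c u) (Icc (-t) t) u :=
      fun u hu => (hD1d u (abs_le.mpr ⟨by linarith [hu.1], by linarith [hu.2]⟩)).hasDerivWithinAt
    have hbound : ∀ u ∈ Ico (-t) t, ‖psi2 q a b c u‖ ≤ M * ‖y‖^2 := by
      intro u hu
      rw [Real.norm_eq_abs]
      exact (hkey u (abs_le.mpr ⟨by linarith [hu.1], by linarith [hu.2.le]⟩)).2.2
    have key := norm_image_sub_le_of_norm_deriv_le_segment' hder hbound t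
      (right_mem_Icc.mpr (by linarith))
    rw [Real.norm_eq_abs] at key
    calc |psi1 q a b c t - psi1 q a b c (-t)| ≤ M * ‖y‖^2 * (t - (-t)) := key
      _ = M * ‖y‖^2 * (2 * t) := by ring
      _ ≤ M * ‖y‖^2 * (2 * 1) := by
          apply mul_le_mul_of_nonneg_left _ hMy
          linarith
      _ = 2 * (M * ‖y‖^2) := by ring
  set F : ℝ → ℝ := fun t => psi q a b c t + psi q a b c (-t) - 2 * psi q a b c 0 with hF
  have hFd : ∀ t ∈ Icc (0:ℝ) 1,
      HasDerivWithinAt F (psi1 q a b c t - psi1 q a b c (-t)) (Icc (0:ℝ) 1) t := by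
    rintro t ⟨ht0, ht1⟩
    have h1 : |t| ≤ 1 := abs_le.mpr ⟨by linarith, ht1⟩
    have h2 : |(-t)| ≤ 1 := by rw [abs_neg]; exact h1
    have hneg : HasDerivAt (fun u : ℝ => psi q a b c (-u)) (psi1 q a b c (-t) * (-1)) t :=
      (hψd (-t) h2).comp t (hasDerivAt_neg t)
    have hsum := ((hψd t h1).add hneg).sub_const (2 * psi q a b c 0)
    have : HasDerivAt F (psi1 q a b c t - psi1 q a b c (-t)) t := by
      convert hsum using 1
      · rfl
      · rfl
      · rfl
      · ring
    exact this.hasDerivWithinAt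
  have hboundF : ∀ t ∈ Ico (0:ℝ) 1, ‖psi1 q a b c t - psi1 q a b c (-t)‖ ≤ 2 * (M * ‖y‖^2) := by
    intro t ht
    rw [Real.norm_eq_abs]
    exact step1 t ⟨ht.1, ht.2.le⟩
  have final := norm_image_sub_le_of_norm_deriv_le_segment_01' hFd hboundF
  have hF0 : F 0 = 0 := by simp only [hF, neg_zero]; ring
  have hF1 : F 1 = gf q ‖x + y‖ + gf q ‖x - y‖ - 2 * gf q ‖x‖ := by
    have e1 : rf a b c 1 = ‖x + y‖ := by
      rw [(hkey 1 (by norm_num)).1, one_smul]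
    have e2 : rf a b c (-1) = ‖x - y‖ := by
      rw [(hkey (-1) (by norm_num : |(-1:ℝ)| ≤ 1)).1, neg_smul, one_smul, ← sub_eq_add_neg]
    have e3 : rf a b c 0 = ‖x‖ := by
      rw [(hkey 0 (by norm_num)).1, zero_smul, add_zero]
    simp only [hF, psi, e1, e2, e3]
  rw [hF0, sub_zero, hF1, Real.norm_eq_abs] at final
  calc |gf q ‖x + y‖ + gf q ‖x - y‖ - 2 * gf q ‖x‖| ≤ 2 * (M * ‖y‖^2) := final
    _ = 2 * M * ‖y‖^2 := by ring

lemma radial_bound (n : ℕ) (hn : 1 ≤ n) (p : ℝ) (hnp : 0 < (n : ℝ) + p) :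
    ∃ c : ℝ, 0 < c ∧ ∀ ρ0 : ℝ, 0 < ρ0 →
      ∫⁻ y in {y : EuclideanSpace ℝ (Fin n) | ‖y‖ ≤ ρ0}, ENNReal.ofReal (‖y‖ ^ p)
        ≤ ENNReal.ofReal (c * ρ0 ^ ((n : ℝ) + p)) := by
  haveI : Nonempty (Fin n) := Fin.pos_iff_nonempty.mp hn
  haveI : Nontrivial (EuclideanSpace ℝ (Fin n)) := inferInstance
  set V := (volume : Measure (EuclideanSpace ℝ (Fin n))) (Metric.ball (0 : EuclideanSpace ℝ (Fin n)) 1) with hV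
  have hVlt : V < ⊤ := measure_ball_lt_top
  have hVpos : 0 < V := Metric.measure_ball_pos _ _ one_pos
  set θ : ℝ := 2 ^ (-((n : ℝ) + p)) with hθ
  have hθpos : 0 < θ := rpow_pos_of_pos two_pos _
  have hθlt : θ < 1 := rpow_lt_one_of_one_lt_of_neg one_lt_two (by linarith)
  set c0 : ℝ := 1 + 2 ^ (-p) with hc0
  have hc0pos : 0 < c0 := by
    have : (0:ℝ) < 2 ^ (-p) := rpow_pos_of_pos two_pos _
    linarith
  refine ⟨c0 * V.toReal * (1 - θ)⁻¹, by
    have h1 : 0 < V.toReal := ENNReal.toReal_pos hVpos.ne' hVlt.ne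
    have h2 : 0 < (1 - θ)⁻¹ := by
      apply inv_pos.mpr; linarith
    positivity, ?_⟩
  intro ρ0 hρ0
  set f : EuclideanSpace ℝ (Fin n) → ℝ≥0∞ := fun y => ENNReal.ofReal (‖y‖ ^ p) with hf
  set A : ℕ → Set (EuclideanSpace ℝ (Fin n)) := fun k =>
    {y : EuclideanSpace ℝ (Fin n) | ρ0 * 2 ^ (-(k : ℝ) - 1) < ‖y‖ ∧ ‖y‖ ≤ ρ0 * 2 ^ (-(k : ℝ))} with hA
  -- covering
  have hcover : {y : EuclideanSpace ℝ (Fin n) | ‖y‖ ≤ ρ0} ⊆ {(0 : EuclideanSpace ℝ (Fin n))} ∪ ⋃ k, A k := by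
    intro y hy
    rcases eq_or_ne y 0 with h0 | h0
    · exact Or.inl h0
    · right
      have hypos : 0 < ‖y‖ := norm_pos_iff.mpr h0
      have hex : ∃ k : ℕ, ρ0 * 2 ^ (-(k : ℝ) - 1) < ‖y‖ := by
        obtain ⟨k, hk⟩ := pow_unbounded_of_one_lt (ρ0 / ‖y‖) (by norm_num : (1:ℝ) < 2)
        refine ⟨k, ?_⟩
        have h2k : (2:ℝ) ^ (-(k:ℝ) - 1) = ((2:ℝ) ^ (k:ℕ) * 2)⁻¹ := by
          rw [show -(k:ℝ) - 1 = -((k:ℝ) + 1) by ring, Real.rpow_neg (by norm_num),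
            Real.rpow_add two_pos, Real.rpow_one, Real.rpow_natCast]
        rw [h2k, ← div_eq_mul_inv]
        rw [div_lt_iff₀ hypos] at hk
        have hpow : (0:ℝ) < (2:ℝ) ^ (k:ℕ) * 2 := by positivity
        rw [div_lt_iff₀ hpow]
        nlinarith [pow_pos (show (0:ℝ) < 2 by norm_num) k]
      set m := Nat.find hex with hm
      have hm1 : ρ0 * 2 ^ (-(m : ℝ) - 1) < ‖y‖ := Nat.find_spec hex
      have hm2 : ‖y‖ ≤ ρ0 * 2 ^ (-(m : ℝ)) := by
        rcases Nat.eq_zero_or_pos m with h | h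
        · rw [h]
          simpa using hy
        · have := Nat.find_min hex (m := m - 1) (by omega)
          push_neg at this
          have hcast : -((m - 1 : ℕ) : ℝ) - 1 = -(m : ℝ) := by
            have : ((m - 1 : ℕ) : ℝ) = (m : ℝ) - 1 := by
              have hm' : 1 ≤ m := h
              push_cast [Nat.cast_sub hm']
              ring
            rw [this]; ring
          rwa [hcast] at this
      exact mem_iUnion.mpr ⟨m, hm1, hm2⟩
  have hmono := lintegral_mono_set (μ := (volume : Measure (EuclideanSpace ℝ (Fin n)))) (f := f) hcover
  have hsplit := lintegral_union_le (μ := (volume : Measure (EuclideanSpace ℝ (Fin n)))) f {(0 : EuclideanSpace ℝ (Fin n))} (⋃ k, A k)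
  have hzero : ∫⁻ y in {(0 : EuclideanSpace ℝ (Fin n))}, f y ∂(volume : Measure (EuclideanSpace ℝ (Fin n))) = 0 := by
    rw [setLIntegral_measure_zero _ _ (measure_singleton _)]
  have hiUnion := lintegral_iUnion_le (μ := (volume : Measure (EuclideanSpace ℝ (Fin n)))) A f
  -- per-annulus bound
  have hterm : ∀ k : ℕ, ∫⁻ y in A k, f y ∂(volume : Measure (EuclideanSpace ℝ (Fin n)))
      ≤ ENNReal.ofReal (c0 * ρ0 ^ ((n : ℝ) + p)) * ENNReal.ofReal θ ^ k * V := by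
    intro k
    have hr2 : (0:ℝ) < 2 ^ (-(k : ℝ)) := rpow_pos_of_pos two_pos _
    have hr2' : (0:ℝ) < 2 ^ (-(k : ℝ) - 1) := rpow_pos_of_pos two_pos _
    set mx : ℝ := (ρ0 * 2 ^ (-(k : ℝ))) ^ p + (ρ0 * 2 ^ (-(k : ℝ) - 1)) ^ p with hmx
    have hmx0 : 0 ≤ mx := by
      have := rpow_nonneg (mul_pos hρ0 hr2).le p
      have := rpow_nonneg (mul_pos hρ0 hr2').le p
      unfold mx; linarith
    have hAmeas : MeasurableSet (A k) := by
      apply MeasurableSet.inter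
      · exact measurableSet_lt measurable_const continuous_norm.measurable
      · exact measurableSet_le continuous_norm.measurable measurable_const
    have hpt : ∀ y ∈ A k, f y ≤ ENNReal.ofReal mx := by
      rintro y ⟨hy1, hy2⟩
      apply ENNReal.ofReal_le_ofReal
      rcases le_or_gt 0 p with hp | hp
      · have h1 : ‖y‖ ^ p ≤ (ρ0 * 2 ^ (-(k : ℝ))) ^ p :=
          rpow_le_rpow (norm_nonneg _) hy2 hp
        have h2 : (0:ℝ) ≤ (ρ0 * 2 ^ (-(k : ℝ) - 1)) ^ p := rpow_nonneg (by positivity) _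
        unfold mx; linarith
      · have h1 : ‖y‖ ^ p ≤ (ρ0 * 2 ^ (-(k : ℝ) - 1)) ^ p :=
          rpow_le_rpow_of_nonpos (by positivity) hy1.le hp.le
        have h2 : (0:ℝ) ≤ (ρ0 * 2 ^ (-(k : ℝ))) ^ p := rpow_nonneg (by positivity) _
        unfold mx; linarith
    have hsub : A k ⊆ Metric.closedBall (0 : EuclideanSpace ℝ (Fin n)) (ρ0 * 2 ^ (-(k : ℝ))) := by
      rintro y ⟨_, hy2⟩
      simpa [Metric.mem_closedBall, dist_zero_right] using hy2
    have hmeasA : (volume : Measure (EuclideanSpace ℝ (Fin n))) (A k)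
        ≤ ENNReal.ofReal ((ρ0 * 2 ^ (-(k : ℝ))) ^ (n:ℕ)) * V := by
      calc (volume : Measure (EuclideanSpace ℝ (Fin n))) (A k) ≤ (volume : Measure (EuclideanSpace ℝ (Fin n))) (Metric.closedBall 0 (ρ0 * 2 ^ (-(k : ℝ)))) :=
            measure_mono hsub
        _ = ENNReal.ofReal ((ρ0 * 2 ^ (-(k : ℝ))) ^ Module.finrank ℝ (EuclideanSpace ℝ (Fin n))) * V :=
            Measure.addHaar_closedBall _ _ (by positivity)
        _ = ENNReal.ofReal ((ρ0 * 2 ^ (-(k : ℝ))) ^ (n:ℕ)) * V := by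
            rw [finrank_euclideanSpace_fin]
    calc ∫⁻ y in A k, f y ∂(volume : Measure (EuclideanSpace ℝ (Fin n)))
        ≤ ∫⁻ _ in A k, ENNReal.ofReal mx ∂(volume : Measure (EuclideanSpace ℝ (Fin n))) := setLIntegral_mono' hAmeas hpt
      _ = ENNReal.ofReal mx * (volume : Measure (EuclideanSpace ℝ (Fin n))) (A k) := setLIntegral_const _ _
      _ ≤ ENNReal.ofReal mx * (ENNReal.ofReal ((ρ0 * 2 ^ (-(k : ℝ))) ^ (n:ℕ)) * V) :=
          mul_le_mul_right hmeasA _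
      _ = ENNReal.ofReal (mx * (ρ0 * 2 ^ (-(k : ℝ))) ^ (n:ℕ)) * V := by
          rw [← mul_assoc, ← ENNReal.ofReal_mul hmx0]
      _ = ENNReal.ofReal (c0 * ρ0 ^ ((n : ℝ) + p) * θ ^ k) * V := by
          congr 1
          -- real identity
          rw [← Real.rpow_natCast (ρ0 * 2 ^ (-(k : ℝ))) n, hmx]
          rw [Real.mul_rpow hρ0.le hr2.le, Real.mul_rpow hρ0.le hr2.le,
            Real.mul_rpow hρ0.le hr2'.le]
          rw [← Real.rpow_natCast θ k, hθ,
            ← Real.rpow_mul (by norm_num : (0:ℝ) ≤ 2),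
            ← Real.rpow_mul (by norm_num : (0:ℝ) ≤ 2),
            ← Real.rpow_mul (by norm_num : (0:ℝ) ≤ 2),
            ← Real.rpow_mul (by norm_num : (0:ℝ) ≤ 2)]
          rw [show ((-(k:ℝ)) - 1) * p = (-(k:ℝ)) * p + (-p) by ring, Real.rpow_add two_pos,
            show (-((n:ℝ) + p)) * (k:ℝ) = (-(k:ℝ)) * (n:ℝ) + (-(k:ℝ)) * p by ring,
            Real.rpow_add two_pos, Real.rpow_add hρ0, hc0]
          ring
      _ = ENNReal.ofReal (c0 * ρ0 ^ ((n : ℝ) + p)) * ENNReal.ofReal θ ^ k * V := by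
          rw [ENNReal.ofReal_mul (by positivity), ENNReal.ofReal_pow hθpos.le]
  -- sum up
  have hsum : ∑' k, (∫⁻ y in A k, f y ∂(volume : Measure (EuclideanSpace ℝ (Fin n))))
      ≤ ENNReal.ofReal (c0 * ρ0 ^ ((n : ℝ) + p)) * (1 - ENNReal.ofReal θ)⁻¹ * V := by
    calc ∑' k, (∫⁻ y in A k, f y ∂(volume : Measure (EuclideanSpace ℝ (Fin n))))
        ≤ ∑' k, ENNReal.ofReal (c0 * ρ0 ^ ((n : ℝ) + p)) * ENNReal.ofReal θ ^ k * V :=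
          ENNReal.tsum_le_tsum hterm
      _ = ENNReal.ofReal (c0 * ρ0 ^ ((n : ℝ) + p)) * (∑' k, ENNReal.ofReal θ ^ k) * V := by
          rw [ENNReal.tsum_mul_right, ENNReal.tsum_mul_left]
      _ = ENNReal.ofReal (c0 * ρ0 ^ ((n : ℝ) + p)) * (1 - ENNReal.ofReal θ)⁻¹ * V := by
          rw [ENNReal.tsum_geometric]
  have hfinal : ∫⁻ y in {y : EuclideanSpace ℝ (Fin n) | ‖y‖ ≤ ρ0}, f y ∂(volume : Measure (EuclideanSpace ℝ (Fin n)))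
      ≤ ENNReal.ofReal (c0 * ρ0 ^ ((n : ℝ) + p)) * (1 - ENNReal.ofReal θ)⁻¹ * V := by
    calc ∫⁻ y in {y : EuclideanSpace ℝ (Fin n) | ‖y‖ ≤ ρ0}, f y ∂(volume : Measure (EuclideanSpace ℝ (Fin n)))
        ≤ ∫⁻ y in {(0 : EuclideanSpace ℝ (Fin n))} ∪ ⋃ k, A k, f y ∂(volume : Measure (EuclideanSpace ℝ (Fin n))) := hmono
      _ ≤ (∫⁻ y in {(0 : EuclideanSpace ℝ (Fin n))}, f y ∂(volume : Measure (EuclideanSpace ℝ (Fin n)))) + ∫⁻ y in ⋃ k, A k, f y ∂(volume : Measure (EuclideanSpace ℝ (Fin n))) := hsplit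
      _ = ∫⁻ y in ⋃ k, A k, f y ∂(volume : Measure (EuclideanSpace ℝ (Fin n))) := by rw [hzero, zero_add]
      _ ≤ ∑' k, (∫⁻ y in A k, f y ∂(volume : Measure (EuclideanSpace ℝ (Fin n)))) := hiUnion
      _ ≤ _ := hsum
  refine hfinal.trans (le_of_eq ?_)
  have h1θ : (1 : ℝ≥0∞) - ENNReal.ofReal θ = ENNReal.ofReal (1 - θ) := by
    rw [ENNReal.ofReal_sub _ hθpos.le, ENNReal.ofReal_one]
  have hcnn : (0:ℝ) ≤ c0 * ρ0 ^ ((n:ℝ) + p) * (1 - θ)⁻¹ :=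
    mul_nonneg (mul_nonneg hc0pos.le (rpow_nonneg hρ0.le _)) (inv_nonneg.mpr (by linarith))
  rw [h1θ, ← ENNReal.ofReal_inv_of_pos (by linarith),
    ← ENNReal.ofReal_mul (mul_nonneg hc0pos.le (rpow_nonneg hρ0.le _)),
    show c0 * V.toReal * (1 - θ)⁻¹ * ρ0 ^ ((n:ℝ) + p)
      = (c0 * ρ0 ^ ((n:ℝ) + p) * (1 - θ)⁻¹) * V.toReal by ring,
    ENNReal.ofReal_mul hcnn, ENNReal.ofReal_toReal hVlt.ne]

lemma phi_eq {n : ℕ} (s : ℝ) {z : EuclideanSpace ℝ (Fin n)} (hz : 1 ≤ ‖z‖) :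
    phi n s z = gf ((n : ℝ) + 2 * s) ‖z‖ := by
  unfold phi gf jbr Hf
  rcases eq_or_lt_of_le hz with h | h
  · rw [if_pos h.symm.le, ← h]
    norm_num
  · rw [if_neg (not_le.mpr h), ← Real.rpow_mul (by positivity : (0:ℝ) ≤ 1 + (‖z‖ - 1)^4),
      show (1:ℝ)/4 * (-((n:ℝ) + 2*s)) = -(((n:ℝ) + 2*s)/4) by ring]

end S11

/-- For `n ≥ 1` and `s ∈ (0,1)`, there is a constant `C > 0` (depending only on
`n` and `s`) such that for every `x` with `|x| ≥ 2`,
`∫_{|y| ≤ |x|/2} |φ(x+y) + φ(x-y) - 2φ(x)| / |y|^{n+2s} dy ≤ C ⟨x⟩^{-n-4s}`. -/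
theorem stmt_11 (n : ℕ) (hn : 1 ≤ n) (s : ℝ) (hs : s ∈ Set.Ioo (0 : ℝ) 1) :
    ∃ C : ℝ, 0 < C ∧ ∀ x : EuclideanSpace ℝ (Fin n), 2 ≤ ‖x‖ →
      ∫⁻ y in {y : EuclideanSpace ℝ (Fin n) | ‖y‖ ≤ ‖x‖ / 2},
          ENNReal.ofReal
            (|phi n s (x + y) + phi n s (x - y) - 2 * phi n s x| /
              ‖y‖ ^ ((n : ℝ) + 2 * s))
        ≤ ENNReal.ofReal (C * jbr x ^ (-((n : ℝ) + 4 * s))) := by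
  obtain ⟨hs0, hs1⟩ := hs
  have hn1 : (1:ℝ) ≤ (n:ℝ) := by exact_mod_cast hn
  set q : ℝ := (n : ℝ) + 2 * s with hqdef
  have hq : 0 < q := by unfold q; linarith
  set p : ℝ := 2 - q with hpdef
  have hnp : 0 < (n : ℝ) + p := by unfold p q; linarith
  obtain ⟨c, hc, hrad⟩ := S11.radial_bound n hn p hnp
  set K0 : ℝ := 2 * (3 * q + q * (q + 4) + 4 * q) * 256 ^ ((q + 2) / 4) with hK0
  have hK0pos : 0 < K0 := by
    have h1 : (0:ℝ) < 3 * q + q * (q + 4) + 4 * q := by nlinarith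
    have h2 : (0:ℝ) < (256:ℝ) ^ ((q + 2) / 4) := rpow_pos_of_pos (by norm_num) _
    unfold K0; positivity
  refine ⟨K0 * c, mul_pos hK0pos hc, ?_⟩
  intro x hx
  set R := ‖x‖ with hR
  have hRpos : (0:ℝ) < R := by linarith
  have hHR := S11.Hf_pos R
  set K1 : ℝ := K0 * S11.Hf R ^ (-((q + 2) / 4)) with hK1
  have hK1nn : 0 ≤ K1 := mul_nonneg hK0pos.le (rpow_nonneg hHR.le _)
  -- pointwise bound
  have hpt : ∀ y : EuclideanSpace ℝ (Fin n), ‖y‖ ≤ R / 2 →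
      |phi n s (x + y) + phi n s (x - y) - 2 * phi n s x| / ‖y‖ ^ q ≤ K1 * ‖y‖ ^ p := by
    intro y hy
    have hxy1 : 1 ≤ ‖x + y‖ := by
      have h1 : ‖x‖ ≤ ‖x + y‖ + ‖y‖ := by
        calc ‖x‖ = ‖(x + y) - y‖ := by rw [add_sub_cancel_right]
          _ ≤ ‖x + y‖ + ‖y‖ := norm_sub_le _ _
      linarith
    have hxy2 : 1 ≤ ‖x - y‖ := by
      have h1 : ‖x‖ ≤ ‖x - y‖ + ‖y‖ := by
        calc ‖x‖ = ‖(x - y) + y‖ := by rw [sub_add_cancel]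
          _ ≤ ‖x - y‖ + ‖y‖ := norm_add_le _ _
      linarith
    have hx1 : 1 ≤ ‖x‖ := by linarith
    have hnum : |phi n s (x + y) + phi n s (x - y) - 2 * phi n s x|
        ≤ K1 * ‖y‖ ^ 2 := by
      rw [S11.phi_eq s hxy1, S11.phi_eq s hxy2, S11.phi_eq s hx1]
      have := S11.secondDiff_bound (q := q) hq x y hx hy
      calc |S11.gf q ‖x + y‖ + S11.gf q ‖x - y‖ - 2 * S11.gf q ‖x‖|
          ≤ 2 * ((3 * q + q * (q + 4) + 4 * q) *
              (256 ^ ((q + 2) / 4) * S11.Hf ‖x‖ ^ (-((q + 2) / 4)))) * ‖y‖ ^ 2 := this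
        _ = K1 * ‖y‖ ^ 2 := by unfold K1 K0; ring
    rcases eq_or_ne y 0 with h0 | h0
    · subst h0
      have hzero : phi n s (x + 0) + phi n s (x - 0) - 2 * phi n s x = 0 := by
        rw [add_zero, sub_zero]; ring
      rw [hzero, abs_zero, zero_div]
      exact mul_nonneg hK1nn (rpow_nonneg (norm_nonneg _) _)
    · have hy0 : 0 < ‖y‖ := norm_pos_iff.mpr h0
      rw [div_le_iff₀ (rpow_pos_of_pos hy0 q)]
      calc |phi n s (x + y) + phi n s (x - y) - 2 * phi n s x| ≤ K1 * ‖y‖ ^ 2 := hnum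
        _ = K1 * ‖y‖ ^ ((2:ℝ)) := by
            rw [show (2:ℝ) = ((2:ℕ):ℝ) by norm_num, Real.rpow_natCast]
        _ = K1 * (‖y‖ ^ p * ‖y‖ ^ q) := by
            rw [← Real.rpow_add hy0, show p + q = 2 by unfold p; ring]
        _ = K1 * ‖y‖ ^ p * ‖y‖ ^ q := by ring
  have hmeas : MeasurableSet {y : EuclideanSpace ℝ (Fin n) | ‖y‖ ≤ R / 2} :=
    measurableSet_le continuous_norm.measurable measurable_const
  -- real comparison at the end
  have hreal : K1 * (c * (R / 2) ^ ((n:ℝ) + p)) ≤ K0 * c * jbr x ^ (-((n : ℝ) + 4 * s)) := by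
    have hjbr : jbr x = S11.Hf R ^ ((1:ℝ)/4) := rfl
    have hjbrpos : 0 < jbr x := by rw [hjbr]; exact rpow_pos_of_pos hHR _
    have hR2jbr : R / 2 ≤ jbr x := by
      have h1 : R - 1 = ((R - 1) ^ 4) ^ ((1:ℝ)/4) := by
        rw [← Real.rpow_natCast (R - 1) 4, ← Real.rpow_mul (by linarith : (0:ℝ) ≤ R - 1)]
        norm_num
      have h2 : ((R - 1) ^ 4 : ℝ) ^ ((1:ℝ)/4) ≤ S11.Hf R ^ ((1:ℝ)/4) := by
        apply Real.rpow_le_rpow (by positivity) _ (by norm_num)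
        unfold S11.Hf; linarith
      rw [hjbr]
      calc R / 2 ≤ R - 1 := by linarith
        _ = ((R - 1) ^ 4) ^ ((1:ℝ)/4) := h1
        _ ≤ S11.Hf R ^ ((1:ℝ)/4) := h2
    have hnp2 : (n:ℝ) + p = 2 - 2 * s := by unfold p q; ring
    have step1 : (R / 2) ^ ((n:ℝ) + p) ≤ jbr x ^ ((n:ℝ) + p) :=
      Real.rpow_le_rpow (by linarith) hR2jbr (by rw [hnp2]; linarith)
    have step2 : S11.Hf R ^ (-((q + 2) / 4)) = jbr x ^ (-(q + 2)) := by
      rw [hjbr, ← Real.rpow_mul hHR.le, show (1:ℝ)/4 * (-(q + 2)) = -((q + 2)/4) by ring]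
    have step3 : jbr x ^ (-(q + 2)) * jbr x ^ ((n:ℝ) + p) = jbr x ^ (-((n : ℝ) + 4 * s)) := by
      rw [← Real.rpow_add hjbrpos]
      congr 1
      unfold p q; ring
    calc K1 * (c * (R / 2) ^ ((n:ℝ) + p))
        = K0 * c * (S11.Hf R ^ (-((q + 2) / 4)) * (R / 2) ^ ((n:ℝ) + p)) := by
          unfold K1; ring
      _ ≤ K0 * c * (jbr x ^ (-(q + 2)) * jbr x ^ ((n:ℝ) + p)) := by
          apply mul_le_mul_of_nonneg_left _ (by positivity)
          rw [step2]
          exact mul_le_mul_of_nonneg_left step1 (rpow_nonneg hjbrpos.le _)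
      _ = K0 * c * jbr x ^ (-((n : ℝ) + 4 * s)) := by rw [step3]
  -- chain
  calc ∫⁻ y in {y : EuclideanSpace ℝ (Fin n) | ‖y‖ ≤ R / 2},
        ENNReal.ofReal (|phi n s (x + y) + phi n s (x - y) - 2 * phi n s x| / ‖y‖ ^ q)
      ≤ ∫⁻ y in {y : EuclideanSpace ℝ (Fin n) | ‖y‖ ≤ R / 2},
          ENNReal.ofReal (K1 * ‖y‖ ^ p) :=
        setLIntegral_mono' hmeas (fun y hy => ENNReal.ofReal_le_ofReal (hpt y hy))
    _ = ∫⁻ y in {y : EuclideanSpace ℝ (Fin n) | ‖y‖ ≤ R / 2},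
          ENNReal.ofReal K1 * ENNReal.ofReal (‖y‖ ^ p) := by
        simp_rw [ENNReal.ofReal_mul hK1nn]
    _ = ENNReal.ofReal K1 * ∫⁻ y in {y : EuclideanSpace ℝ (Fin n) | ‖y‖ ≤ R / 2},
          ENNReal.ofReal (‖y‖ ^ p) :=
        lintegral_const_mul' _ _ ENNReal.ofReal_ne_top
    _ ≤ ENNReal.ofReal K1 * ENNReal.ofReal (c * (R / 2) ^ ((n:ℝ) + p)) :=
        mul_le_mul_right (hrad (R / 2) (by linarith)) _
    _ = ENNReal.ofReal (K1 * (c * (R / 2) ^ ((n:ℝ) + p))) := (ENNReal.ofReal_mul hK1nn).symm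
    _ ≤ ENNReal.ofReal (K0 * c * jbr x ^ (-((n : ℝ) + 4 * s))) := ENNReal.ofReal_le_ofReal hreal
end

section
/- Let n ≥ 1 and s ∈ (0,1]. Set ⟨x⟩ = (1 + (|x| - 1)^4)^{1/4} for x ∈ ℝⁿ, and define φ : ℝⁿ → ℝ by φ(x) = 1 if |x| ≤ 1 and φ(x) = ⟨x⟩^{-n-2s} if |x| ≥ 1. Then there exists a constant C > 0 (depending only on n and s) such that the Laplacian of φ satisfies |Δφ(x)| ≤ C ⟨x⟩^{-n-2s-2} for all x ∈ ℝⁿ; in particular |Δφ(x)| ≤ C φ(x) for all x ∈ ℝⁿ. -/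
open MeasureTheory Real Set Asymptotics

/-- The Laplace operator on `ℝⁿ`: the sum of the pure second derivatives in the
directions of the standard orthonormal basis. -/
noncomputable def lap (n : ℕ) (f : EuclideanSpace ℝ (Fin n) → ℝ)
    (x : EuclideanSpace ℝ (Fin n)) : ℝ :=
  ∑ i : Fin n, iteratedFDeriv ℝ 2 f x
    ![EuclideanSpace.single i (1 : ℝ), EuclideanSpace.single i (1 : ℝ)]


section Stmt13Aux

lemma hasDerivAt_maxpow (m : ℕ) (y : ℝ) :
    HasDerivAt (fun r : ℝ => max r 0 ^ (m + 2)) ((m + 2) * max y 0 ^ (m + 1)) y := by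
  rcases lt_trichotomy y 0 with hy | hy | hy
  · have hev : (fun r : ℝ => max r 0 ^ (m + 2)) =ᶠ[nhds y] fun _ => (0:ℝ) := by
      filter_upwards [Iio_mem_nhds hy] with r hr
      simp [max_eq_right (le_of_lt (Set.mem_Iio.mp hr)), zero_pow]
    have h := (hasDerivAt_const y (0:ℝ)).congr_of_eventuallyEq hev
    simpa [max_eq_right hy.le, zero_pow] using h
  · subst hy
    have hval : ((m:ℝ) + 2) * max (0:ℝ) 0 ^ (m + 1) = 0 := by simp
    rw [hval]
    rw [hasDerivAt_iff_isLittleO]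
    simp only [sub_zero, smul_zero, max_self, zero_pow (Nat.succ_ne_zero (m+1))]
    have hbig : (fun h : ℝ => max h 0 ^ (m + 2)) =O[nhds 0] fun h : ℝ => h ^ (m + 2) := by
      refine IsBigO.of_bound 1 ?_
      filter_upwards with h
      simp only [one_mul, norm_pow, Real.norm_eq_abs]
      refine pow_le_pow_left₀ (abs_nonneg _) ?_ _
      rw [abs_of_nonneg (le_max_right h 0)]
      exact max_le (le_abs_self h) (abs_nonneg h)
    exact hbig.trans_isLittleO (isLittleO_pow_id (by omega))
  · have hev : (fun r : ℝ => max r 0 ^ (m + 2)) =ᶠ[nhds y] fun r => r ^ (m + 2) := by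
      filter_upwards [Ioi_mem_nhds hy] with r hr
      simp [max_eq_left (le_of_lt (Set.mem_Ioi.mp hr))]
    have h := (hasDerivAt_pow (m + 2) y).congr_of_eventuallyEq hev
    simpa [max_eq_left hy.le] using h

noncomputable def TT (r : ℝ) : ℝ := max (r - 1) 0

lemma TT_nonneg (r : ℝ) : 0 ≤ TT r := le_max_right _ _

lemma hasDerivAt_TTpow (m : ℕ) (r : ℝ) :
    HasDerivAt (fun r : ℝ => TT r ^ (m + 2)) ((m + 2) * TT r ^ (m + 1)) r := by
  have h := (hasDerivAt_maxpow m (r - 1)).comp r ((hasDerivAt_id r).sub_const 1)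
  simpa [TT, Function.comp_def] using h

lemma AA_pos (r : ℝ) : (0:ℝ) < 1 + TT r ^ 4 := by positivity

noncomputable def gg (p r : ℝ) : ℝ := (1 + TT r ^ 4) ^ (-(p/4))
noncomputable def g1 (p r : ℝ) : ℝ := -p * (1 + TT r ^ 4) ^ (-(p/4) - 1) * TT r ^ 3
noncomputable def g2 (p r : ℝ) : ℝ :=
  p * (p + 4) * (1 + TT r ^ 4) ^ (-(p/4) - 2) * TT r ^ 6
    - 3 * p * (1 + TT r ^ 4) ^ (-(p/4) - 1) * TT r ^ 2

lemma hasDerivAt_AA (r : ℝ) :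
    HasDerivAt (fun r : ℝ => 1 + TT r ^ 4) (4 * TT r ^ 3) r := by
  have h := (hasDerivAt_TTpow 2 r).const_add 1
  norm_num at h ⊢
  exact h

lemma hasDerivAt_gg (p r : ℝ) : HasDerivAt (gg p) (g1 p r) r := by
  have h := (hasDerivAt_AA r).rpow_const (p := -(p/4)) (Or.inl (AA_pos r).ne')
  refine h.congr_deriv ?_
  unfold g1; ring

lemma hasDerivAt_g1 (p r : ℝ) : HasDerivAt (g1 p) (g2 p r) r := by
  have hA := (hasDerivAt_AA r).rpow_const (p := -(p/4) - 1) (Or.inl (AA_pos r).ne')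
  have hmul := ((hA.const_mul (-p)).mul (hasDerivAt_TTpow 1 r))
  have heq : (fun r => -p * (1 + TT r ^ 4) ^ (-(p/4) - 1) * TT r ^ (1 + 2)) = g1 p := by
    funext r; unfold g1; norm_num
  rw [show (1:ℕ)+2 = 3 from rfl] at hmul
  have : (fun r => -p * (1 + TT r ^ 4) ^ (-(p/4) - 1) * TT r ^ 3) = g1 p := rfl
  have hmul : HasDerivAt (g1 p) _ r := hmul
  refine hmul.congr_deriv ?_
  unfold g2
  rw [show -(p/4) - 1 - 1 = -(p/4) - 2 by ring]
  norm_num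
  ring

noncomputable def kk (p r : ℝ) : ℝ := g1 p r / r

lemma hasDerivAt_kk (p : ℝ) {r : ℝ} (hr : r ≠ 0) :
    HasDerivAt (kk p) ((g2 p r * r - g1 p r) / r ^ 2) r := by
  have h := (hasDerivAt_g1 p r).div (hasDerivAt_id r) hr
  have h' : HasDerivAt (kk p) _ r := h
  simpa using h'

lemma myHasFDerivAt_norm {E : Type*} [NormedAddCommGroup E] [InnerProductSpace ℝ E]
    (x : E) (hx : x ≠ 0) :
    HasFDerivAt (fun y : E => ‖y‖) (‖x‖⁻¹ • innerSL ℝ x) x := by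
  have hx' : (0:ℝ) < ‖x‖ := norm_pos_iff.2 hx
  have h1 : HasFDerivAt (fun y : E => ‖y‖ ^ 2) (2 • innerSL ℝ x) x := by
    simpa using (hasStrictFDerivAt_norm_sq x).hasFDerivAt
  have h2 : HasDerivAt Real.sqrt (1 / (2 * Real.sqrt (‖x‖ ^ 2))) (‖x‖ ^ 2) :=
    Real.hasDerivAt_sqrt (by positivity)
  have h3 := h2.comp_hasFDerivAt x h1
  have heq : (fun y : E => Real.sqrt (‖y‖ ^ 2)) = fun y : E => ‖y‖ := by
    funext y; rw [Real.sqrt_sq (norm_nonneg y)]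
  rw [Function.comp_def, heq] at h3
  refine h3.congr_fderiv ?_
  rw [Real.sqrt_sq (norm_nonneg x)]
  ext v
  simp [smul_smul]
  ring


lemma phi_eq (n : ℕ) (s : ℝ) (x : EuclideanSpace ℝ (Fin n)) :
    phi n s x = gg ((n:ℝ) + 2 * s) ‖x‖ := by
  unfold phi gg jbr TT
  by_cases h : ‖x‖ ≤ 1
  · rw [if_pos h, max_eq_right (by linarith)]
    norm_num
  · push_neg at h
    rw [if_neg (not_le.mpr h), max_eq_left (by linarith)]
    rw [← Real.rpow_mul (by positivity)]
    congr 1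
    ring

lemma hasFDerivAt_phi {n : ℕ} (s : ℝ) {y : EuclideanSpace ℝ (Fin n)} (hy : y ≠ 0) :
    HasFDerivAt (phi n s) (kk ((n:ℝ) + 2 * s) ‖y‖ • innerSL ℝ y) y := by
  set p := (n:ℝ) + 2 * s
  have h := (hasDerivAt_gg p ‖y‖).comp_hasFDerivAt y (myHasFDerivAt_norm y hy)
  have heq : (gg p ∘ fun y : EuclideanSpace ℝ (Fin n) => ‖y‖) = phi n s :=
    funext fun z => (phi_eq n s z).symm
  rw [heq] at h
  refine h.congr_fderiv ?_
  rw [smul_smul, kk, div_eq_mul_inv]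

lemma fderiv_phi_at {n : ℕ} (s : ℝ) {y : EuclideanSpace ℝ (Fin n)} (hy : y ≠ 0) :
    fderiv ℝ (phi n s) y = kk ((n:ℝ) + 2 * s) ‖y‖ • innerSL ℝ y :=
  (hasFDerivAt_phi s hy).fderiv

lemma lap_eq {n : ℕ} (s : ℝ) {x : EuclideanSpace ℝ (Fin n)} (hx : 1 ≤ ‖x‖) :
    lap n (phi n s) x = g2 ((n:ℝ) + 2 * s) ‖x‖
      + ((n:ℝ) - 1) * g1 ((n:ℝ) + 2 * s) ‖x‖ / ‖x‖ := by
  set p := (n:ℝ) + 2 * s with hp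
  have hr0 : (0:ℝ) < ‖x‖ := lt_of_lt_of_le one_pos hx
  have hx0 : x ≠ 0 := fun h => by rw [h, norm_zero] at hr0; exact lt_irrefl 0 hr0
  set r := ‖x‖ with hrdef
  set K : ℝ := (g2 p r * r - g1 p r) / r ^ 2 with hK
  have hc : HasFDerivAt (fun y : EuclideanSpace ℝ (Fin n) => kk p ‖y‖)
      (K • (r⁻¹ • innerSL ℝ x)) x :=
    by have := (hasDerivAt_kk p hr0.ne').comp_hasFDerivAt x (myHasFDerivAt_norm x hx0); exact this
  have hf : HasFDerivAt
      (fun y : EuclideanSpace ℝ (Fin n) => (innerSL ℝ y : EuclideanSpace ℝ (Fin n) →L[ℝ] ℝ))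
      (innerSL ℝ : EuclideanSpace ℝ (Fin n) →L[ℝ] (EuclideanSpace ℝ (Fin n) →L[ℝ] ℝ)) x :=
    ContinuousLinearMap.hasFDerivAt _
  have hB := hc.smul hf
  have hev : fderiv ℝ (phi n s) =ᶠ[nhds x]
      fun y => kk p ‖y‖ • innerSL ℝ y := by
    filter_upwards [IsOpen.mem_nhds isOpen_compl_singleton hx0] with y hy
    exact fderiv_phi_at s hy
  have h2 := hev.fderiv_eq.trans hB.fderiv
  unfold lap
  have hterm : ∀ i : Fin n, iteratedFDeriv ℝ 2 (phi n s) x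
      ![EuclideanSpace.single i (1 : ℝ), EuclideanSpace.single i (1 : ℝ)]
      = kk p r * (inner ℝ (EuclideanSpace.single i (1:ℝ)) (EuclideanSpace.single i (1:ℝ)) : ℝ)
        + K * (r⁻¹ * (inner ℝ x (EuclideanSpace.single i (1:ℝ)) : ℝ))
          * (inner ℝ x (EuclideanSpace.single i (1:ℝ)) : ℝ) := by
    intro i
    rw [iteratedFDeriv_two_apply, h2]
    simp [ContinuousLinearMap.smul_apply, ContinuousLinearMap.add_apply,
      ContinuousLinearMap.smulRight_apply, innerSL_apply_apply, smul_eq_mul]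
    show kk p ‖x‖ * inner ℝ (EuclideanSpace.single i (1:ℝ)) (EuclideanSpace.single i (1:ℝ)) = kk p r
    simp [hrdef]
  rw [Finset.sum_congr rfl fun i _ => hterm i]
  have hinner1 : ∀ i : Fin n,
      (inner ℝ (EuclideanSpace.single i (1:ℝ)) (EuclideanSpace.single i (1:ℝ)) : ℝ) = 1 := by
    intro i
    rw [EuclideanSpace.inner_single_left]
    simp
  have hinner2 : ∀ i : Fin n, (inner ℝ x (EuclideanSpace.single i (1:ℝ)) : ℝ) = x i := by
    intro i
    rw [EuclideanSpace.inner_single_right]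
    simp
  simp only [hinner1, hinner2, mul_one]
  rw [Finset.sum_add_distrib, Finset.sum_const, Finset.card_univ, Fintype.card_fin]
  have hxx : ∑ i : Fin n, x i * x i = r ^ 2 := by
    rw [hrdef, EuclideanSpace.norm_eq, Real.sq_sqrt (by positivity)]
    refine Finset.sum_congr rfl fun i _ => ?_
    rw [Real.norm_eq_abs, sq_abs, sq]
  have hsum : ∑ i : Fin n, K * (r⁻¹ * x i) * x i = K * r⁻¹ * r ^ 2 := by
    rw [Finset.sum_congr rfl (fun i _ => show K * (r⁻¹ * x i) * x i
      = K * r⁻¹ * (x i * x i) by ring), ← Finset.mul_sum, hxx]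
  rw [hsum, nsmul_eq_mul]
  unfold K
  unfold kk
  field_simp
  ring

lemma lap_zero {n : ℕ} (s : ℝ) {x : EuclideanSpace ℝ (Fin n)} (hx : ‖x‖ < 1) :
    lap n (phi n s) x = 0 := by
  have hxball : x ∈ Metric.ball (0 : EuclideanSpace ℝ (Fin n)) 1 := by
    simpa [Metric.mem_ball, dist_zero_right] using hx
  have h1 : ∀ y ∈ Metric.ball (0 : EuclideanSpace ℝ (Fin n)) 1,
      fderiv ℝ (phi n s) y = 0 := by
    intro y hy
    have hev : phi n s =ᶠ[nhds y] fun _ => (1:ℝ) := by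
      filter_upwards [Metric.isOpen_ball.mem_nhds hy] with z hz
      unfold phi
      rw [if_pos (le_of_lt (by simpa [Metric.mem_ball, dist_zero_right] using hz))]
    rw [hev.fderiv_eq, fderiv_const_apply]
  have hev2 : fderiv ℝ (phi n s) =ᶠ[nhds x]
      fun _ => (0 : EuclideanSpace ℝ (Fin n) →L[ℝ] ℝ) := by
    filter_upwards [Metric.isOpen_ball.mem_nhds hxball] with y hy
    exact h1 y hy
  have h2 : fderiv ℝ (fderiv ℝ (phi n s)) x = 0 := by
    rw [hev2.fderiv_eq, fderiv_const_apply]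
  unfold lap
  simp [iteratedFDeriv_two_apply, h2]

lemma g_bound {p : ℝ} (hp : 0 < p) {n : ℕ} (hn1 : (1:ℝ) ≤ (n:ℝ)) {r : ℝ} (hr : 1 ≤ r) :
    |g2 p r + ((n:ℝ) - 1) * g1 p r / r|
      ≤ (p * (p + 4) + 3 * p + ((n:ℝ) - 1) * p) * (1 + (r - 1) ^ 4) ^ ((-p - 2)/4) := by
  have hr0 : (0:ℝ) < r := lt_of_lt_of_le one_pos hr
  have ht0 : (0:ℝ) ≤ r - 1 := by linarith
  have hT : TT r = r - 1 := max_eq_left ht0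
  set t := r - 1 with htdef
  set A := 1 + t ^ 4 with hAdef
  have hA0 : (0:ℝ) < A := by positivity
  have h12 : t ^ 2 ≤ A ^ ((1:ℝ)/2) := by
    have h4 : (t^2)^2 ≤ A := by rw [← pow_mul]; norm_num; linarith [sq_nonneg (t^2)]
    have hs : t ^ 2 ≤ Real.sqrt A := by
      rw [show t ^ 2 = Real.sqrt ((t^2)^2) from (Real.sqrt_sq (by positivity)).symm]
      exact Real.sqrt_le_sqrt h4
    rwa [Real.sqrt_eq_rpow] at hs
  have h32 : t ^ 6 ≤ A ^ ((3:ℝ)/2) := by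
    have h := pow_le_pow_left₀ (by positivity) h12 3
    rw [← pow_mul] at h
    norm_num at h
    have h2 : (A ^ ((1:ℝ)/2)) ^ (3:ℕ) = A ^ ((3:ℝ)/2) := by
      rw [← Real.rpow_natCast (A ^ ((1:ℝ)/2)) 3, ← Real.rpow_mul hA0.le]
      norm_num
    rwa [h2] at h
  set Q : ℝ := A ^ ((-p - 2)/4) with hQdef
  have hQ0 : 0 ≤ Q := Real.rpow_nonneg hA0.le _
  have e1 : A ^ (-(p/4) - 2) * t ^ 6 ≤ Q := by
    have hsplit : A ^ (-(p/4) - 2) = Q * A ^ (-(3:ℝ)/2) := by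
      rw [hQdef, ← Real.rpow_add hA0]
      congr 1
      ring
    have key : A ^ (-(3:ℝ)/2) * t ^ 6 ≤ 1 := by
      have h := mul_le_mul_of_nonneg_left h32 (Real.rpow_nonneg hA0.le (-(3:ℝ)/2))
      rwa [← Real.rpow_add hA0, show (-(3:ℝ)/2) + (3:ℝ)/2 = 0 by ring, Real.rpow_zero] at h
    calc A ^ (-(p/4) - 2) * t ^ 6 = Q * (A ^ (-(3:ℝ)/2) * t ^ 6) := by rw [hsplit]; ring
      _ ≤ Q * 1 := mul_le_mul_of_nonneg_left key hQ0
      _ = Q := mul_one Q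
  have e2 : A ^ (-(p/4) - 1) * t ^ 2 ≤ Q := by
    have hsplit : A ^ (-(p/4) - 1) = Q * A ^ (-(1:ℝ)/2) := by
      rw [hQdef, ← Real.rpow_add hA0]
      congr 1
      ring
    have key : A ^ (-(1:ℝ)/2) * t ^ 2 ≤ 1 := by
      have h := mul_le_mul_of_nonneg_left h12 (Real.rpow_nonneg hA0.le (-(1:ℝ)/2))
      rwa [← Real.rpow_add hA0, show (-(1:ℝ)/2) + (1:ℝ)/2 = 0 by ring, Real.rpow_zero] at h
    calc A ^ (-(p/4) - 1) * t ^ 2 = Q * (A ^ (-(1:ℝ)/2) * t ^ 2) := by rw [hsplit]; ring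
      _ ≤ Q * 1 := mul_le_mul_of_nonneg_left key hQ0
      _ = Q := mul_one Q
  have e3 : A ^ (-(p/4) - 1) * t ^ 3 / r ≤ Q := by
    have ht3 : t ^ 3 / r ≤ t ^ 2 := by
      rw [div_le_iff₀ hr0]
      nlinarith [sq_nonneg t, ht0]
    calc A ^ (-(p/4) - 1) * t ^ 3 / r = A ^ (-(p/4) - 1) * (t ^ 3 / r) := by ring
      _ ≤ A ^ (-(p/4) - 1) * t ^ 2 :=
          mul_le_mul_of_nonneg_left ht3 (Real.rpow_nonneg hA0.le _)
      _ ≤ Q := e2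
  set U1 : ℝ := A ^ (-(p/4) - 2) * t ^ 6 with hU1
  set U2 : ℝ := A ^ (-(p/4) - 1) * t ^ 2 with hU2
  set U3 : ℝ := A ^ (-(p/4) - 1) * t ^ 3 / r with hU3
  have hU10 : 0 ≤ U1 := by positivity
  have hU20 : 0 ≤ U2 := by positivity
  have hU30 : 0 ≤ U3 := by positivity
  have hexpr : g2 p r + ((n:ℝ) - 1) * g1 p r / r
      = p * (p + 4) * U1 - 3 * p * U2 - ((n:ℝ) - 1) * p * U3 := by
    unfold g2 g1
    rw [hT]
    rw [hU1, hU2, hU3, ← hAdef]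
    ring
  rw [hexpr]
  have hn0 : (0:ℝ) ≤ (n:ℝ) - 1 := by linarith
  have hb1 : p * (p + 4) * U1 ≤ p * (p + 4) * Q :=
    mul_le_mul_of_nonneg_left e1 (by positivity)
  have hb2 : 3 * p * U2 ≤ 3 * p * Q := mul_le_mul_of_nonneg_left e2 (by positivity)
  have hb3 : ((n:ℝ) - 1) * p * U3 ≤ ((n:ℝ) - 1) * p * Q :=
    mul_le_mul_of_nonneg_left e3 (by positivity)
  have hp1 : 0 ≤ p * (p + 4) * U1 := by positivity
  have hp2 : 0 ≤ 3 * p * U2 := by positivity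
  have hp3 : 0 ≤ ((n:ℝ) - 1) * p * U3 := mul_nonneg (mul_nonneg hn0 hp.le) hU30
  have hq1 : 0 ≤ p * (p + 4) * Q := by positivity
  have hq2 : 0 ≤ 3 * p * Q := by positivity
  have hq3 : 0 ≤ ((n:ℝ) - 1) * p * Q := mul_nonneg (mul_nonneg hn0 hp.le) hQ0
  rw [abs_le]
  constructor
  · linarith
  · linarith

end Stmt13Aux

theorem stmt_13 (n : ℕ) (hn : 1 ≤ n) (s : ℝ) (hs : s ∈ Set.Ioc (0 : ℝ) 1) :
    ∃ C : ℝ, 0 < C ∧ ∀ x : EuclideanSpace ℝ (Fin n),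
      |lap n (phi n s) x| ≤ C * jbr x ^ (-((n : ℝ) + 2 * s) - 2) ∧
      |lap n (phi n s) x| ≤ C * phi n s x := by
  obtain ⟨hs0, _⟩ := hs
  have hn1 : (1:ℝ) ≤ (n:ℝ) := by exact_mod_cast hn
  set p := (n:ℝ) + 2 * s with hpdef
  have hp : 0 < p := by
    have : (0:ℝ) ≤ (n:ℝ) := Nat.cast_nonneg n
    rw [hpdef]; linarith
  set C := p * (p + 4) + 3 * p + ((n:ℝ) - 1) * p with hC
  have hCpos : 0 < C := by nlinarith
  refine ⟨C, hCpos, fun x => ?_⟩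
  have hjbr1 : 1 ≤ jbr x := by
    unfold jbr
    apply Real.one_le_rpow (le_add_of_nonneg_right (by positivity)) (by norm_num)
  have hjbr0 : 0 < jbr x := lt_of_lt_of_le one_pos hjbr1
  have key : |lap n (phi n s) x| ≤ C * jbr x ^ (-p - 2) := by
    rcases lt_or_ge ‖x‖ 1 with h | h
    · rw [lap_zero s h, abs_zero]
      positivity
    · rw [lap_eq s h]
      have hb := g_bound hp hn1 h
      have hj : jbr x ^ (-p - 2) = (1 + (‖x‖ - 1)^4) ^ ((-p-2)/4) := by
        unfold jbr
        rw [← Real.rpow_mul (by positivity)]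
        congr 1
        ring
      rw [hj, hC]
      exact hb
  refine ⟨key, key.trans ?_⟩
  apply mul_le_mul_of_nonneg_left ?_ hCpos.le
  unfold phi
  split_ifs with h
  · exact Real.rpow_le_one_of_one_le_of_nonpos hjbr1 (by nlinarith)
  · exact Real.rpow_le_rpow_of_exponent_le hjbr1 (by linarith)
end
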